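/- arXiv:2409.01858 — 4 statements merged into one kernel-verified Lean document; each statement's English description precedes it below -/
import Mathlib

section
/- Let Ω ⊂ ℝⁿ be a bounded open domain with C¹ boundary, and let u : Ω̄ → ℝ be C¹ on Ω̄ with ∂u/∂ν > 0 at every point of ∂Ω. Set m := inf_{∂Ω} ∂u/∂ν and assume m > 0. Then the open ball B_m(0) of radius m centered at the origin is contained in ∇u(Γ_u), i.e. for every z ∈ ℝⁿ with |z| < m there exists y ∈ Γ_u with ∇u(y) = z. -/
open MeasureTheory Metric
open scoped RealInnerProductSpace

noncomputable section

/-- `ν` is an outward unit normal vector field on the boundary of `Ω`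
(in the first-order sense appropriate for a `C¹` boundary). -/
def IsOutwardUnitNormal {n : ℕ} (Ω : Set (EuclideanSpace ℝ (Fin n)))
    (ν : EuclideanSpace ℝ (Fin n) → EuclideanSpace ℝ (Fin n)) : Prop :=
  ContinuousOn ν (frontier Ω) ∧
  ∀ x ∈ frontier Ω, ‖ν x‖ = 1 ∧
    ∀ ε > 0, ∃ δ > 0, ∀ y ∈ closure Ω, dist y x < δ →
      ⟪ν x, y - x⟫ ≤ ε * ‖y - x‖

/-- The lower contact set `Γ_u` of `u` in `Ω`, where `G` is the gradient field of `u`. -/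
def lowerContactSet {n : ℕ} (Ω : Set (EuclideanSpace ℝ (Fin n)))
    (u : EuclideanSpace ℝ (Fin n) → ℝ)
    (G : EuclideanSpace ℝ (Fin n) → EuclideanSpace ℝ (Fin n)) :
    Set (EuclideanSpace ℝ (Fin n)) :=
  {x ∈ Ω | ∀ y ∈ closure Ω, u x + ⟪G x, y - x⟫ ≤ u y}

theorem stmt0 {n : ℕ} (hn : 0 < n)
    (Ω : Set (EuclideanSpace ℝ (Fin n))) (hΩo : IsOpen Ω)
    (hΩb : Bornology.IsBounded Ω) (hΩne : Ω.Nonempty)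
    (ν : EuclideanSpace ℝ (Fin n) → EuclideanSpace ℝ (Fin n))
    (hν : IsOutwardUnitNormal Ω ν)
    (u : EuclideanSpace ℝ (Fin n) → ℝ)
    (G : EuclideanSpace ℝ (Fin n) → EuclideanSpace ℝ (Fin n))
    -- `u ∈ C¹(Ω̄)` : `u` is continuous on `Ω̄`, differentiable in `Ω` with gradient `G`,
    -- and `G` is continuous up to the boundary
    (hu : ContinuousOn u (closure Ω))
    (hG : ∀ x ∈ Ω, HasGradientAt u (G x) x)
    (hGc : ContinuousOn G (closure Ω))
    -- `∂u/∂ν > 0` on `∂Ω`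
    (hpos : ∀ x ∈ frontier Ω, 0 < ⟪G x, ν x⟫)
    (m : ℝ) (hm : m = sInf ((fun x => ⟪G x, ν x⟫) '' frontier Ω)) (hm0 : 0 < m) :
    Metric.ball (0 : EuclideanSpace ℝ (Fin n)) m ⊆ G '' lowerContactSet Ω u G := by
  have hclne : (closure Ω).Nonempty := hΩne.closure
  have hcomp : IsCompact (closure Ω) := hΩb.isCompact_closure
  have hfront : frontier Ω = closure Ω \ Ω := hΩo.frontier_eq
  intro z hz
  rw [mem_ball_zero_iff] at hz
  set c : ℝ := m - ‖z‖ with hc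
  have hc0 : 0 < c := by simp [hc]; linarith
  set f : EuclideanSpace ℝ (Fin n) → ℝ := fun y => u y - ⟪z, y⟫ with hfdef
  have hfc : ContinuousOn f (closure Ω) :=
    hu.sub ((continuous_const.inner continuous_id).continuousOn)
  obtain ⟨x₀, hx₀cl, hmin⟩ := hcomp.exists_isMinOn hclne hfc
  have hminle : ∀ y ∈ closure Ω, f x₀ ≤ f y := fun y hy => hmin hy
  by_cases hx₀ : x₀ ∈ Ω
  · -- interior minimum
    have hd : HasFDerivAt f ((InnerProductSpace.toDual ℝ _) (G x₀) - innerSL ℝ z) x₀ :=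
      ((hG x₀ hx₀).hasFDerivAt).sub ((innerSL ℝ z).hasFDerivAt)
    have hloc : IsLocalMin f x₀ :=
      hmin.isLocalMin (Filter.mem_of_superset (hΩo.mem_nhds hx₀) subset_closure)
    have h0 := hloc.hasFDerivAt_eq_zero hd
    have hGz : G x₀ = z := by
      have h1 : ⟪G x₀ - z, G x₀ - z⟫ = 0 := by
        have h2 := DFunLike.congr_fun h0 (G x₀ - z)
        simp [inner_sub_left] at h2
        rw [inner_sub_left]; linarith
      rwa [inner_self_eq_zero, sub_eq_zero] at h1
    refine ⟨x₀, ⟨hx₀, fun y hy => ?_⟩, hGz⟩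
    have h3 := hminle y hy
    simp only [hfdef] at h3
    rw [hGz, inner_sub_right]
    linarith
  · -- boundary minimum: contradiction
    exfalso
    have hx₀fr : x₀ ∈ frontier Ω := hfront ▸ ⟨hx₀cl, hx₀⟩
    have hν₀ : ‖ν x₀‖ = 1 := (hν.2 x₀ hx₀fr).1
    have hmle : m ≤ ⟪G x₀, ν x₀⟫ := by
      rw [hm]
      exact csInf_le ⟨0, fun r ⟨x, hx, hr⟩ => hr ▸ (hpos x hx).le⟩ ⟨x₀, hx₀fr, rfl⟩
    have hcle : c ≤ ⟪G x₀ - z, ν x₀⟫ := by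
      rw [inner_sub_left]
      have h1 := real_inner_le_norm z (ν x₀)
      rw [hν₀, mul_one] at h1
      simp only [hc]; linarith
    -- continuity of G at x₀
    obtain ⟨δ₂, hδ₂0, hδ₂⟩ := Metric.continuousWithinAt_iff.mp (hGc x₀ hx₀cl) (c/2)
      (by positivity)
    have hGest : ∀ y ∈ closure Ω, dist y x₀ < δ₂ → c/2 ≤ ⟪G y - z, ν x₀⟫ := by
      intro y hy hdy
      have h1 := hδ₂ hy hdy
      rw [dist_eq_norm] at h1
      have h2 : ⟪G y - z, ν x₀⟫ = ⟪G x₀ - z, ν x₀⟫ + ⟪G y - G x₀, ν x₀⟫ := by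
        rw [← inner_add_left]
        congr 1
        abel
      have h3 : |⟪G y - G x₀, ν x₀⟫| ≤ ‖G y - G x₀‖ := by
        simpa [hν₀] using abs_real_inner_le_norm (G y - G x₀) (ν x₀)
      have h4 := (abs_le.mp h3).1
      linarith
    -- continuity of ν at x₀
    obtain ⟨δ₁, hδ₁0, hδ₁⟩ := Metric.continuousWithinAt_iff.mp (hν.1 x₀ hx₀fr) (1/2)
      (by norm_num)
    have hν₁ : ∀ q ∈ frontier Ω, dist q x₀ < δ₁ → (1:ℝ)/2 < ⟪ν q, ν x₀⟫ := by
      intro q hq hdq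
      have h1 := hδ₁ hq hdq
      rw [dist_eq_norm] at h1
      have h2 : ⟪ν q, ν x₀⟫ = ⟪ν x₀, ν x₀⟫ + ⟪ν q - ν x₀, ν x₀⟫ := by
        rw [← inner_add_left]; congr 1; abel
      have h3 : |⟪ν q - ν x₀, ν x₀⟫| ≤ ‖ν q - ν x₀‖ := by
        simpa [hν₀] using abs_real_inner_le_norm (ν q - ν x₀) (ν x₀)
      have h4 := (abs_le.mp h3).1
      have h5 : ⟪ν x₀, ν x₀⟫ = 1 := by
        rw [real_inner_self_eq_norm_sq, hν₀]; norm_num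
      linarith
    -- key: frontier points near x₀ reject approach from direction +ν x₀
    have hkey : ∀ q ∈ frontier Ω, dist q x₀ < δ₁ →
        ∃ δq > 0, ∀ t : ℝ, 0 < t → t < δq → q + t • ν x₀ ∉ closure Ω := by
      intro q hq hdq
      obtain ⟨δq, hδq0, hδq⟩ := (hν.2 q hq).2 (1/4) (by norm_num)
      refine ⟨δq, hδq0, fun t ht0 htδ hmem => ?_⟩
      have hd : dist (q + t • ν x₀) q = t := by
        rw [dist_eq_norm, add_sub_cancel_left, norm_smul, hν₀, mul_one,
          Real.norm_eq_abs, abs_of_pos ht0]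
      have h6 := hδq _ hmem (by rw [hd]; exact htδ)
      rw [add_sub_cancel_left] at h6
      have h7 : ‖t • ν x₀‖ = t := by
        rw [norm_smul, hν₀, mul_one, Real.norm_eq_abs, abs_of_pos ht0]
      rw [h7, real_inner_smul_right] at h6
      have h8 := hν₁ q hq hdq
      nlinarith
    set ρ : ℝ := min δ₁ δ₂ with hρdef
    have hρ0 : 0 < ρ := lt_min hδ₁0 hδ₂0
    set T : ℝ := ρ/4 with hTdef
    have hT0 : 0 < T := by positivity
    -- choose y₁ ∈ Ω near x₀ with f y₁ close to f x₀
    obtain ⟨δ₃, hδ₃0, hδ₃⟩ := Metric.continuousWithinAt_iff.mp (hfc x₀ hx₀cl) (c*T/4)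
      (by positivity)
    obtain ⟨y₁, hy₁Ω, hy₁d⟩ := Metric.mem_closure_iff.mp hx₀cl (min δ₃ (ρ/4))
      (by positivity)
    rw [dist_comm] at hy₁d
    have hy₁d₃ : dist y₁ x₀ < δ₃ := hy₁d.trans_le (min_le_left _ _)
    have hy₁dρ : dist y₁ x₀ < ρ/4 := hy₁d.trans_le (min_le_right _ _)
    have hfy₁ : f y₁ < f x₀ + c*T/4 := by
      have := hδ₃ (subset_closure hy₁Ω) hy₁d₃
      rw [Real.dist_eq] at this
      have := (abs_lt.mp this).2
      linarith
    set γ : ℝ → EuclideanSpace ℝ (Fin n) := fun s => y₁ - s • ν x₀ with hγdef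
    have hγ0 : γ 0 = y₁ := by simp [hγdef]
    have hγsub : ∀ s s' : ℝ, γ s' - γ s = (s - s') • ν x₀ := by
      intro s s'
      simp only [hγdef, sub_smul]
      abel
    have hγd : ∀ s s' : ℝ, dist (γ s) (γ s') = |s - s'| := by
      intro s s'
      rw [dist_eq_norm, hγsub s' s, norm_smul, hν₀, mul_one, Real.norm_eq_abs,
        abs_sub_comm]
    have hγdist : ∀ s ∈ Set.Icc (0:ℝ) T, dist (γ s) x₀ < ρ := by
      intro s hs
      have h1 : dist (γ s) y₁ = |s| := by
        have := hγd s 0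
        rwa [hγ0, sub_zero] at this
      have h2 := dist_triangle (γ s) y₁ x₀
      rw [h1, abs_of_nonneg hs.1] at h2
      have : s ≤ T := hs.2
      simp only [hTdef] at this
      linarith
    have hγδ₁ : ∀ s ∈ Set.Icc (0:ℝ) T, dist (γ s) x₀ < δ₁ :=
      fun s hs => (hγdist s hs).trans_le (min_le_left _ _)
    have hγδ₂ : ∀ s ∈ Set.Icc (0:ℝ) T, dist (γ s) x₀ < δ₂ :=
      fun s hs => (hγdist s hs).trans_le (min_le_right _ _)
    -- the step lemma
    have hstep : ∀ s ∈ Set.Icc (0:ℝ) T, (∀ s' ∈ Set.Icc 0 s, γ s' ∈ closure Ω) →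
        γ s ∈ Ω := by
      intro s hs hcl
      by_contra hns
      have hfr' : γ s ∈ frontier Ω :=
        hfront ▸ ⟨hcl s ⟨hs.1, le_rfl⟩, hns⟩
      have hs0 : 0 < s := by
        rcases eq_or_lt_of_le hs.1 with h | h
        · exfalso; apply hns; rw [← h, hγ0]; exact hy₁Ω
        · exact h
      obtain ⟨δq, hδq0, hδq⟩ := hkey (γ s) hfr' (hγδ₁ s hs)
      set s' := max (s - δq/2) 0 with hs'def
      have hs'1 : 0 ≤ s' := le_max_right _ _
      have hs'2 : s' < s := max_lt (by linarith) hs0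
      have hs'3 : s - s' < δq := by
        have : s - δq/2 ≤ s' := le_max_left _ _
        linarith
      have hmem : γ s' ∈ closure Ω := hcl s' ⟨hs'1, hs'2.le⟩
      apply hδq (s - s') (by linarith) hs'3
      have he : γ s + (s - s') • ν x₀ = γ s' := by
        rw [← hγsub s s']; abel
      rw [he]; exact hmem
    -- segment in closure
    have hsegcl : ∀ s ∈ Set.Icc (0:ℝ) T, γ s ∈ closure Ω := by
      set A := {s : ℝ | s ∈ Set.Icc (0:ℝ) T ∧ ∀ s' ∈ Set.Icc (0:ℝ) s, γ s' ∈ closure Ω}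
        with hAdef
      have h0A : 0 ∈ A := by
        refine ⟨⟨le_rfl, hT0.le⟩, fun s' hs' => ?_⟩
        have : s' = 0 := le_antisymm hs'.2 hs'.1
        rw [this, hγ0]; exact subset_closure hy₁Ω
      have hAne : A.Nonempty := ⟨0, h0A⟩
      have hbdd : BddAbove A := ⟨T, fun a ha => ha.1.2⟩
      set s₀ := sSup A with hs₀def
      have hs₀0 : 0 ≤ s₀ := le_csSup hbdd h0A
      have hs₀T : s₀ ≤ T := csSup_le hAne fun a ha => ha.1.2
      have hcl₀ : ∀ s' : ℝ, 0 ≤ s' → s' < s₀ → γ s' ∈ closure Ω := by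
        intro s' h1 h2
        obtain ⟨a, haA, hlt⟩ := exists_lt_of_lt_csSup hAne h2
        exact haA.2 s' ⟨h1, hlt.le⟩
      have hcls₀ : γ s₀ ∈ closure Ω := by
        rcases eq_or_lt_of_le hs₀0 with h | h
        · rw [← h, hγ0]; exact subset_closure hy₁Ω
        · have hγc : Continuous γ := by
            simp only [hγdef]
            exact continuous_const.sub (continuous_id.smul continuous_const)
          have h1 : s₀ ∈ closure (Set.Ico (0:ℝ) s₀) := by
            rw [closure_Ico h.ne]; exact ⟨hs₀0, le_rfl⟩
          have h2 : γ s₀ ∈ closure (γ '' Set.Ico (0:ℝ) s₀) :=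
            image_closure_subset_closure_image hγc ⟨s₀, h1, rfl⟩
          have h3 : closure (γ '' Set.Ico (0:ℝ) s₀) ⊆ closure Ω := by
            rw [← closure_closure (s := Ω)]
            apply closure_mono
            rintro _ ⟨t, ht, rfl⟩
            exact hcl₀ t ht.1 ht.2
          exact h3 h2
      have hs₀A : s₀ ∈ A := by
        refine ⟨⟨hs₀0, hs₀T⟩, fun s' hs' => ?_⟩
        rcases eq_or_lt_of_le hs'.2 with h | h
        · rw [h]; exact hcls₀
        · exact hcl₀ s' hs'.1 h
      have hs₀eq : s₀ = T := by
        by_contra hne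
        have hlt : s₀ < T := lt_of_le_of_ne hs₀T hne
        have hs₀Ω : γ s₀ ∈ Ω := hstep s₀ ⟨hs₀0, hs₀T⟩ hs₀A.2
        obtain ⟨η, hη0, hη⟩ := Metric.isOpen_iff.mp hΩo (γ s₀) hs₀Ω
        have hs₂A : min T (s₀ + η/2) ∈ A := by
          refine ⟨⟨le_min hT0.le (by linarith), min_le_left _ _⟩, fun s' hs' => ?_⟩
          rcases le_or_gt s' s₀ with h | h
          · exact hs₀A.2 s' ⟨hs'.1, h⟩
          · apply subset_closure
            apply hη
            rw [mem_ball, hγd]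
            have h1 : s' ≤ s₀ + η/2 := hs'.2.trans (min_le_right _ _)
            rw [abs_of_nonneg (by linarith)]
            linarith
        have h1 : min T (s₀ + η/2) ≤ s₀ := le_csSup hbdd hs₂A
        have h2 : s₀ < min T (s₀ + η/2) := lt_min hlt (by linarith)
        linarith
      intro s hsIcc
      exact hs₀A.2 s (by rw [hs₀eq] at hs₀A ⊢; exact hsIcc)
    have hseg : ∀ s ∈ Set.Icc (0:ℝ) T, γ s ∈ Ω := fun s hs =>
      hstep s hs fun s' hs' => hsegcl s' ⟨hs'.1, hs'.2.trans hs.2⟩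
    -- derivative of f ∘ γ
    have hφ : ∀ s ∈ Set.Icc (0:ℝ) T,
        HasDerivAt (fun t => f (γ t)) (-⟪G (γ s) - z, ν x₀⟫) s := by
      intro s hs
      have hγs : γ s ∈ Ω := hseg s hs
      have hγder : HasDerivAt γ (-ν x₀) s := by
        have h1 : HasDerivAt (fun t : ℝ => t • ν x₀) ((1:ℝ) • ν x₀) s :=
          (hasDerivAt_id s).smul_const _
        have h5 := (hasDerivAt_const s y₁).sub h1
        rw [one_smul, zero_sub] at h5
        exact h5
      have h2 : HasDerivAt (fun t => u (γ t)) (⟪G (γ s), -ν x₀⟫) s := by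
        have := ((hG _ hγs).hasFDerivAt).comp_hasDerivAt s hγder
        exact this.congr_deriv (by simp)
      have h3 : HasDerivAt (fun t => ⟪z, γ t⟫) (⟪z, -ν x₀⟫) s := by
        have := (innerSL ℝ z).hasFDerivAt.comp_hasDerivAt s hγder
        exact this.congr_deriv (by simp)
      have h4 := h2.sub h3
      refine h4.congr_deriv ?_
      rw [inner_sub_left, inner_neg_right, inner_neg_right]
      ring
    -- the perturbed function is antitone
    set ψ : ℝ → ℝ := fun s => f (γ s) + (c/2) * s with hψdef
    have hψd : ∀ s ∈ Set.Icc (0:ℝ) T,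
        HasDerivAt ψ (-⟪G (γ s) - z, ν x₀⟫ + c/2) s := by
      intro s hs
      have h1 : HasDerivAt (fun t : ℝ => (c/2) * t) (c/2) s := by
        simpa using (hasDerivAt_id s).const_mul (c/2)
      exact (hφ s hs).add h1
    have hanti : AntitoneOn ψ (Set.Icc (0:ℝ) T) := by
      apply antitoneOn_of_deriv_nonpos (convex_Icc 0 T)
      · exact fun s hs => ((hψd s hs).differentiableAt.continuousAt.continuousWithinAt)
      · intro s hs
        rw [interior_Icc] at hs
        exact ((hψd s (Set.Ioo_subset_Icc_self hs)).differentiableAt.differentiableWithinAt)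
      · intro s hs
        rw [interior_Icc] at hs
        have hsI := Set.Ioo_subset_Icc_self hs
        rw [(hψd s hsI).deriv]
        have := hGest (γ s) (subset_closure (hseg s hsI)) (hγδ₂ s hsI)
        linarith
    have hfin := hanti (Set.left_mem_Icc.mpr hT0.le) (Set.right_mem_Icc.mpr hT0.le) hT0.le
    have h1 : f x₀ ≤ f (γ T) :=
      hminle _ (subset_closure (hseg T (Set.right_mem_Icc.mpr hT0.le)))
    have e0 : ψ 0 = f y₁ := by simp [hψdef, hγ0]
    have eT : ψ T = f (γ T) + c/2 * T := rfl
    rw [e0, eT] at hfin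
    have hcT : 0 < c * T := mul_pos hc0 hT0
    have h2 : c/2 * T = c*T/2 := by ring
    rw [h2] at hfin
    have h3 : f x₀ + c*T/2 ≤ f y₁ := le_trans (by linarith) hfin
    have h4 : f x₀ + c*T/2 < f x₀ + c*T/4 := h3.trans_lt hfy₁
    have h5 : c*T/2 < c*T/4 := by exact lt_of_add_lt_add_left h4
    clear_value T c
    linarith
end
end

section
/- Let Ω ⊂ ℝⁿ be a bounded open domain with C¹ boundary, and let u : Ω̄ → ℝ be C¹ on Ω̄ with ∂u/∂ν < 0 at every point of ∂Ω. Set m := inf_{∂Ω} |∂u/∂ν| and assume m > 0. Then the open ball B_m(0) of radius m centered at the origin is contained in ∇u(Γ^u), i.e. for every z ∈ ℝⁿ with |z| < m there exists y ∈ Γ^u with ∇u(y) = z. -/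
open MeasureTheory Metric
open scoped RealInnerProductSpace

noncomputable section

/-- The upper contact set `Γ^u` of `u` in `Ω`, where `G` is the gradient field of `u`. -/
def upperContactSet {n : ℕ} (Ω : Set (EuclideanSpace ℝ (Fin n)))
    (u : EuclideanSpace ℝ (Fin n) → ℝ)
    (G : EuclideanSpace ℝ (Fin n) → EuclideanSpace ℝ (Fin n)) :
    Set (EuclideanSpace ℝ (Fin n)) :=
  {x ∈ Ω | ∀ y ∈ closure Ω, u y ≤ u x + ⟪G x, y - x⟫}

set_option maxHeartbeats 1000000 in
theorem stmt1 {n : ℕ} (hn : 0 < n)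
    (Ω : Set (EuclideanSpace ℝ (Fin n))) (hΩo : IsOpen Ω)
    (hΩb : Bornology.IsBounded Ω) (hΩne : Ω.Nonempty)
    (ν : EuclideanSpace ℝ (Fin n) → EuclideanSpace ℝ (Fin n))
    (hν : IsOutwardUnitNormal Ω ν)
    (u : EuclideanSpace ℝ (Fin n) → ℝ)
    (G : EuclideanSpace ℝ (Fin n) → EuclideanSpace ℝ (Fin n))
    -- `u ∈ C¹(Ω̄)` : `u` is continuous on `Ω̄`, differentiable in `Ω` with gradient `G`,
    -- and `G` is continuous up to the boundary
    (hu : ContinuousOn u (closure Ω))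
    (hG : ∀ x ∈ Ω, HasGradientAt u (G x) x)
    (hGc : ContinuousOn G (closure Ω))
    -- `∂u/∂ν < 0` on `∂Ω`
    (hneg : ∀ x ∈ frontier Ω, ⟪G x, ν x⟫ < 0)
    (m : ℝ) (hm : m = sInf ((fun x => |⟪G x, ν x⟫|) '' frontier Ω)) (hm0 : 0 < m) :
    Metric.ball (0 : EuclideanSpace ℝ (Fin n)) m ⊆ G '' upperContactSet Ω u G := by
  intro z hz
  rw [mem_ball, dist_zero_right] at hz
  set c : ℝ := m - ‖z‖ with hc
  have hc0 : 0 < c := by simp only [hc]; linarith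
  set v : EuclideanSpace ℝ (Fin n) → ℝ := fun x => u x - ⟪z, x⟫ with hv
  have hinnercont : Continuous fun x : EuclideanSpace ℝ (Fin n) => ⟪z, x⟫ :=
    (innerSL ℝ z).continuous
  have hvC : ContinuousOn v (closure Ω) := hu.sub hinnercont.continuousOn
  have hCcomp : IsCompact (closure Ω) := hΩb.isCompact_closure
  obtain ⟨x₀, hx₀C, hmax⟩ := hCcomp.exists_isMaxOn hΩne.closure hvC
  have hmax' : ∀ y ∈ closure Ω, v y ≤ v x₀ := hmax
  by_cases hx₀ : x₀ ∈ Ω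
  · -- interior maximum: the gradient vanishes there, giving a contact point with `G x₀ = z`
    have hloc : IsLocalMax v x₀ :=
      hmax.isLocalMax (mem_nhds_iff.2 ⟨Ω, subset_closure, hΩo, hx₀⟩)
    have hFz : HasFDerivAt (fun x : EuclideanSpace ℝ (Fin n) => ⟪z, x⟫)
        (InnerProductSpace.toDual ℝ (EuclideanSpace ℝ (Fin n)) z) x₀ :=
      (InnerProductSpace.toDual ℝ (EuclideanSpace ℝ (Fin n)) z).hasFDerivAt
    have hFu : HasFDerivAt u (InnerProductSpace.toDual ℝ (EuclideanSpace ℝ (Fin n)) (G x₀)) x₀ :=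
      (hG x₀ hx₀).hasFDerivAt
    have hFv : HasFDerivAt v
        (InnerProductSpace.toDual ℝ (EuclideanSpace ℝ (Fin n)) (G x₀) -
          InnerProductSpace.toDual ℝ (EuclideanSpace ℝ (Fin n)) z) x₀ := hFu.sub hFz
    have h0 := hloc.hasFDerivAt_eq_zero hFv
    have hGz : G x₀ = z := by
      have : InnerProductSpace.toDual ℝ (EuclideanSpace ℝ (Fin n)) (G x₀) =
          InnerProductSpace.toDual ℝ (EuclideanSpace ℝ (Fin n)) z := by
        rwa [sub_eq_zero] at h0
      exact (InnerProductSpace.toDual ℝ (EuclideanSpace ℝ (Fin n))).injective this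
    refine ⟨x₀, ⟨hx₀, fun y hy => ?_⟩, hGz⟩
    have := hmax' y hy
    simp only [hv] at this
    rw [hGz, inner_sub_right]
    linarith
  · -- boundary maximum: contradiction
    exfalso
    have hx₀F : x₀ ∈ frontier Ω := by
      rw [hΩo.frontier_eq]; exact ⟨hx₀C, hx₀⟩
    set ν₀ : EuclideanSpace ℝ (Fin n) := ν x₀ with hν₀def
    have hν₀ : ‖ν₀‖ = 1 := (hν.2 x₀ hx₀F).1
    -- ⟪G x₀, ν₀⟫ ≤ -m
    have hGν : ⟪G x₀, ν₀⟫ ≤ -m := by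
      have h1 := hneg x₀ hx₀F
      have h2 : m ≤ |⟪G x₀, ν x₀⟫| := by
        rw [hm]
        exact csInf_le ⟨0, fun y ⟨x, hx, hxy⟩ => hxy ▸ abs_nonneg _⟩ ⟨x₀, hx₀F, rfl⟩
      rw [abs_of_neg h1] at h2
      simp only [hν₀def]
      linarith
    -- continuity of G at x₀ within the closure
    have hGcw : ContinuousWithinAt G (closure Ω) x₀ := hGc x₀ hx₀C
    obtain ⟨r₁, hr₁0, hr₁⟩ : ∃ r₁ > 0, ∀ x ∈ closure Ω, dist x x₀ < r₁ →
        dist (G x) (G x₀) < c / 2 :=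
      Metric.continuousWithinAt_iff.1 hGcw (c / 2) (by linarith)
    -- continuity of ν at x₀ within the frontier
    obtain ⟨ρ, hρ0, hρ⟩ : ∃ ρ > 0, ∀ w ∈ frontier Ω, dist w x₀ < ρ →
        dist (ν w) (ν x₀) < 1 / 4 :=
      Metric.continuousWithinAt_iff.1 (hν.1 x₀ hx₀F) (1 / 4) (by norm_num)
    set D : ℝ := min ρ r₁ / 4 with hD
    have hD0 : 0 < D := by positivity
    -- choose an interior point ω close to x₀ with v ω close to the max
    have hvw : ContinuousWithinAt v (closure Ω) x₀ := hvC x₀ hx₀C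
    have hvΩ : Filter.Tendsto v (nhdsWithin x₀ Ω) (nhds (v x₀)) :=
      hvw.mono_left (nhdsWithin_mono x₀ subset_closure)
    have hev1 : ∀ᶠ y in nhdsWithin x₀ Ω, v x₀ - v y < c / 2 * D := by
      have : Set.Ioi (v x₀ - c / 2 * D) ∈ nhds (v x₀) :=
        Ioi_mem_nhds (by nlinarith)
      filter_upwards [hvΩ this] with y hy
      simp only [Set.mem_preimage, Set.mem_Ioi] at hy
      linarith
    have hev2 : ∀ᶠ y in nhdsWithin x₀ Ω, dist y x₀ < D :=
      eventually_nhdsWithin_of_eventually_nhds (Metric.eventually_nhds_iff.2 ⟨D, hD0, fun {y} h => h⟩)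
    have hne : (nhdsWithin x₀ Ω).NeBot := mem_closure_iff_nhdsWithin_neBot.1 hx₀C
    obtain ⟨ω, ⟨hωd, hωv⟩, hωΩ⟩ :
        ∃ ω, (dist ω x₀ < D ∧ v x₀ - v ω < c / 2 * D) ∧ ω ∈ Ω :=
      ((hev2.and hev1).and eventually_mem_nhdsWithin).exists
    -- the inward ray from ω
    set ψ : ℝ → EuclideanSpace ℝ (Fin n) := fun σ => ω - σ • ν₀ with hψdef
    have hψcont : Continuous ψ := continuous_const.sub (continuous_id.smul continuous_const)
    have hψdist : ∀ s t : ℝ, dist (ψ s) (ψ t) = |s - t| := by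
      intro s t
      rw [dist_eq_norm]
      have : ψ s - ψ t = (t - s) • ν₀ := by
        simp only [hψdef]
        module
      rw [this, norm_smul, hν₀, mul_one, Real.norm_eq_abs, abs_sub_comm]
    -- the first exit time τ
    set E : Set ℝ := {t : ℝ | 0 ≤ t ∧ ψ t ∉ Ω} with hE
    obtain ⟨R, hR⟩ : ∃ R, Ω ⊆ Metric.closedBall 0 R := hΩb.subset_closedBall 0
    have hEne : E.Nonempty := by
      refine ⟨‖ω‖ + |R| + 1, by positivity, fun hmem => ?_⟩
      have h1 : ‖ψ (‖ω‖ + |R| + 1)‖ ≤ |R| := by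
        have := hR hmem
        simp only [Metric.mem_closedBall, dist_zero_right] at this
        exact this.trans (le_abs_self R)
      have h2 : ‖(‖ω‖ + |R| + 1) • ν₀‖ - ‖ω‖ ≤ ‖ψ (‖ω‖ + |R| + 1)‖ := by
        have := norm_sub_norm_le ((‖ω‖ + |R| + 1) • ν₀) ω
        calc ‖(‖ω‖ + |R| + 1) • ν₀‖ - ‖ω‖ ≤ ‖(‖ω‖ + |R| + 1) • ν₀ - ω‖ := this
          _ = ‖ψ (‖ω‖ + |R| + 1)‖ := by rw [← norm_neg]; congr 1; simp [hψdef]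
      rw [norm_smul, hν₀, mul_one, Real.norm_eq_abs] at h2
      have : |‖ω‖ + |R| + 1| = ‖ω‖ + |R| + 1 := abs_of_pos (by positivity)
      rw [this] at h2
      linarith
    have hEclosed : IsClosed E := by
      have : E = Set.Ici (0:ℝ) ∩ ψ ⁻¹' Ωᶜ := rfl
      rw [this]
      exact isClosed_Ici.inter (hΩo.isClosed_compl.preimage hψcont)
    have hEbdd : BddBelow E := ⟨0, fun t ht => ht.1⟩
    set τ : ℝ := sInf E with hτdef
    have hτE : τ ∈ E := hEclosed.csInf_mem hEne hEbdd
    have hτ0 : 0 ≤ τ := hτE.1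
    have hτpos : 0 < τ := by
      obtain ⟨ε, hε0, hεball⟩ := Metric.isOpen_iff.1 hΩo ω hωΩ
      have hlb : ∀ t ∈ E, ε ≤ t := by
        intro t ht
        by_contra hlt
        push_neg at hlt
        apply ht.2
        apply hεball
        have hωψ : ω = ψ 0 := by simp [hψdef]
        rw [Metric.mem_ball, hωψ, hψdist]
        rw [sub_zero, abs_of_nonneg ht.1]
        exact hlt
      calc (0:ℝ) < ε := hε0
        _ ≤ τ := le_csInf hEne hlb
    have hσΩ : ∀ σ : ℝ, 0 ≤ σ → σ < τ → ψ σ ∈ Ω := by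
      intro σ h0 hσ
      by_contra hnot
      exact absurd (csInf_le hEbdd ⟨h0, hnot⟩) (not_le.2 hσ)
    -- ψ τ and generally ψ of [0, τ] lies in the closure
    have hwcl' : ψ τ ∈ closure Ω := by
      rw [Metric.mem_closure_iff]
      intro ε hε0
      have hs0 : (0:ℝ) ≤ max 0 (τ - ε / 2) := le_max_left _ _
      have hsτ : max 0 (τ - ε / 2) < τ := by
        rcases le_or_gt τ (ε / 2) with h' | h'
        · rw [max_eq_left (by linarith)]; exact hτpos
        · rw [max_eq_right (by linarith)]; linarith
      refine ⟨ψ (max 0 (τ - ε / 2)), hσΩ _ hs0 hsτ, ?_⟩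
      rw [hψdist]
      have h1 : τ - max 0 (τ - ε / 2) ≤ ε / 2 := by
        rcases le_or_gt τ (ε / 2) with h' | h'
        · have := le_max_left (0:ℝ) (τ - ε / 2); linarith
        · rw [max_eq_right (by linarith)]; linarith
      rw [abs_of_nonneg (by linarith)]
      linarith
    have hψcl : ∀ σ : ℝ, 0 ≤ σ → σ ≤ τ → ψ σ ∈ closure Ω := by
      intro σ h0 hστ
      rcases lt_or_eq_of_le hστ with h | h
      · exact subset_closure (hσΩ σ h0 h)
      · rw [h]; exact hwcl'
    -- growth estimate along the ray
    set tstar : ℝ := min τ D with htstar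
    have htstar0 : 0 < tstar := lt_min hτpos hD0
    have htstarτ : tstar ≤ τ := min_le_left _ _
    have htstarD : tstar ≤ D := min_le_right _ _
    have hseg : ∀ σ ∈ Set.Icc (0:ℝ) tstar, ψ σ ∈ closure Ω := fun σ hσ =>
      hψcl σ hσ.1 (hσ.2.trans htstarτ)
    have hnear : ∀ σ ∈ Set.Icc (0:ℝ) tstar, dist (ψ σ) x₀ < r₁ := by
      intro σ hσ
      have h1 : dist (ψ σ) ω = σ := by
        rw [show ω = ψ 0 by simp [hψdef], hψdist, sub_zero, abs_of_nonneg hσ.1]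
      calc dist (ψ σ) x₀ ≤ dist (ψ σ) ω + dist ω x₀ := dist_triangle _ _ _
        _ < D + D := by rw [h1]; exact add_lt_add_of_le_of_lt (hσ.2.trans htstarD) hωd
        _ ≤ r₁ := by
            have : min ρ r₁ ≤ r₁ := min_le_right _ _
            simp only [hD]; linarith
    -- derivative of v along the ray is at least c/2 in Ω near x₀
    set h : ℝ → ℝ := fun σ => v (ψ σ) - σ * (c / 2) with hhdef
    have hderiv : ∀ σ ∈ Set.Ioo (0:ℝ) tstar,
        HasDerivAt h (⟪G (ψ σ), -ν₀⟫ + ⟪z, ν₀⟫ - c / 2) σ := by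
      intro σ hσ
      have hψσΩ : ψ σ ∈ Ω := hσΩ σ hσ.1.le (lt_of_lt_of_le hσ.2 htstarτ)
      have hψd : HasDerivAt ψ (-ν₀) σ := by
        have h1 : HasDerivAt (fun s : ℝ => s • ν₀) ((1:ℝ) • ν₀) σ :=
          (hasDerivAt_id σ).smul_const ν₀
        simpa using h1.const_sub ω
      have hu' : HasDerivAt (fun s => u (ψ s)) (⟪G (ψ σ), -ν₀⟫) σ := by
        have := ((hG (ψ σ) hψσΩ).hasFDerivAt).comp_hasDerivAt σ hψd
        simpa [Function.comp_def] using this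
      have hz' : HasDerivAt (fun s => ⟪z, ψ s⟫) (-⟪z, ν₀⟫) σ := by
        have heq : (fun s => ⟪z, ψ s⟫) = fun s : ℝ => ⟪z, ω⟫ - s * ⟪z, ν₀⟫ := by
          funext s
          simp [hψdef, inner_sub_right, inner_smul_right]
        rw [heq]
        simpa using ((hasDerivAt_id σ).mul_const ⟪z, ν₀⟫).const_sub ⟪z, ω⟫
      have hlin : HasDerivAt (fun s : ℝ => s * (c / 2)) (c / 2) σ := by
        simpa using (hasDerivAt_id σ).mul_const (c / 2)
      have := (hu'.sub hz').sub hlin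
      convert this using 1
      · rfl
      · rfl
      · rfl
      · ring
    have hderiv_nonneg : ∀ σ ∈ Set.Ioo (0:ℝ) tstar,
        0 ≤ ⟪G (ψ σ), -ν₀⟫ + ⟪z, ν₀⟫ - c / 2 := by
      intro σ hσ
      have hσIcc : σ ∈ Set.Icc (0:ℝ) tstar := ⟨hσ.1.le, hσ.2.le⟩
      have hGnear : ‖G (ψ σ) - G x₀‖ < c / 2 := by
        have := hr₁ (ψ σ) (hseg σ hσIcc) (hnear σ hσIcc)
        rwa [dist_eq_norm] at this
      have h1 : ⟪G (ψ σ) - G x₀, ν₀⟫ ≤ ‖G (ψ σ) - G x₀‖ := by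
        calc ⟪G (ψ σ) - G x₀, ν₀⟫ ≤ ‖G (ψ σ) - G x₀‖ * ‖ν₀‖ := real_inner_le_norm _ _
          _ = ‖G (ψ σ) - G x₀‖ := by rw [hν₀, mul_one]
      have h2 : ⟪G (ψ σ), ν₀⟫ = ⟪G x₀, ν₀⟫ + ⟪G (ψ σ) - G x₀, ν₀⟫ := by
        rw [inner_sub_left]; ring
      have h3 : -⟪z, ν₀⟫ ≤ ‖z‖ := by
        have := abs_real_inner_le_norm z ν₀
        rw [hν₀, mul_one] at this
        have := neg_abs_le ⟪z, ν₀⟫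
        linarith [abs_real_inner_le_norm z ν₀]
      have h4 : ⟪G (ψ σ), -ν₀⟫ = -⟪G (ψ σ), ν₀⟫ := by
        rw [inner_neg_right]
      rw [h4, h2]
      simp only [hc] at *
      linarith
    have hmono : MonotoneOn h (Set.Icc (0:ℝ) tstar) := by
      apply monotoneOn_of_deriv_nonneg (convex_Icc _ _)
      · apply ContinuousOn.sub
        · exact hvC.comp hψcont.continuousOn hseg
        · exact (continuous_id.mul continuous_const).continuousOn
      · intro σ hσ
        rw [interior_Icc] at hσ
        exact ((hderiv σ hσ).differentiableAt).differentiableWithinAt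
      · intro σ hσ
        rw [interior_Icc] at hσ
        rw [(hderiv σ hσ).deriv]
        exact hderiv_nonneg σ hσ
    have hgrow : v ω + tstar * (c / 2) ≤ v (ψ tstar) := by
      have := hmono (Set.left_mem_Icc.2 htstar0.le) (Set.right_mem_Icc.2 htstar0.le) htstar0.le
      simp only [hhdef] at this
      have hψ0 : ψ 0 = ω := by simp [hψdef]
      rw [hψ0] at this
      linarith
    -- hence tstar < D, so τ = tstar < D
    have htstarlt : tstar < D := by
      have hle : v (ψ tstar) ≤ v x₀ :=
        hmax' _ (hψcl tstar htstar0.le htstarτ)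
      have h1 : tstar * (c / 2) < c / 2 * D := by
        have h2 : tstar * (c / 2) ≤ v x₀ - v ω := le_trans (by linarith) (sub_le_sub_right hle (v ω))
        linarith
      rw [mul_comm (c / 2) D] at h1
      exact lt_of_mul_lt_mul_right h1 (by linarith)
    have hτD : τ < D := by
      rcases le_or_gt τ D with h' | h'
      · have heq : tstar = τ := by rw [htstar, min_eq_left h']
        rwa [heq] at htstarlt
      · exfalso
        have heq : tstar = D := by rw [htstar, min_eq_right h'.le]
        rw [heq] at htstarlt
        exact lt_irrefl _ htstarlt
    -- the exit point w
    set w : EuclideanSpace ℝ (Fin n) := ψ τ with hwdef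
    have hwcl : w ∈ closure Ω := hψcl τ hτ0 le_rfl
    have hwF : w ∈ frontier Ω := by
      rw [hΩo.frontier_eq]; exact ⟨hwcl, hτE.2⟩
    have hwx₀ : dist w x₀ < ρ := by
      have h1 : dist w ω = τ := by
        rw [show ω = ψ 0 by simp [hψdef], hwdef, hψdist, sub_zero, abs_of_nonneg hτ0]
      calc dist w x₀ ≤ dist w ω + dist ω x₀ := dist_triangle _ _ _
        _ < D + D := by rw [h1]; exact add_lt_add hτD hωd
        _ ≤ ρ := by
            have : min ρ r₁ ≤ ρ := min_le_left _ _
            simp only [hD]; linarith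
    -- ν w is close to ν₀
    have hνw : (3:ℝ) / 4 < ⟪ν w, ν₀⟫ := by
      have h1 : ‖ν w - ν₀‖ < 1 / 4 := by
        have := hρ w hwF hwx₀
        rwa [dist_eq_norm] at this
      have h2 : ⟪ν w, ν₀⟫ = ⟪ν₀, ν₀⟫ + ⟪ν w - ν₀, ν₀⟫ := by
        rw [inner_sub_left]; ring
      have h3 : |⟪ν w - ν₀, ν₀⟫| ≤ ‖ν w - ν₀‖ := by
        have := abs_real_inner_le_norm (ν w - ν₀) ν₀
        rwa [hν₀, mul_one] at this
      have h4 : ⟪ν₀, ν₀⟫ = 1 := by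
        rw [real_inner_self_eq_norm_mul_norm, hν₀]; norm_num
      have := neg_abs_le ⟪ν w - ν₀, ν₀⟫
      rw [h2, h4]
      linarith
    -- the supporting property at w is violated
    obtain ⟨δ, hδ0, hδ⟩ := (hν.2 w hwF).2 (1 / 2) (by norm_num)
    set ζ : ℝ := min τ δ / 2 with hζ
    have hζ0 : 0 < ζ := by
      have := lt_min hτpos hδ0
      positivity
    set σ : ℝ := τ - ζ with hσdef
    have hσ0 : 0 ≤ σ := by
      have : ζ ≤ τ / 2 := by
        rw [hζ]
        have : min τ δ ≤ τ := min_le_left _ _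
        linarith
      simp only [hσdef]; linarith
    have hστ : σ < τ := by simp only [hσdef]; linarith
    have hyΩ : ψ σ ∈ Ω := hσΩ σ hσ0 hστ
    have hydist : dist (ψ σ) w < δ := by
      rw [hwdef, hψdist]
      have h1 : |σ - τ| = ζ := by
        rw [hσdef, abs_of_nonpos (by linarith)]; ring
      rw [h1, hζ]
      have : min τ δ ≤ δ := min_le_right _ _
      linarith
    have hsupp := hδ (ψ σ) (subset_closure hyΩ) hydist
    have hyw : ψ σ - w = ζ • ν₀ := by
      simp only [hψdef, hwdef, hσdef]
      module
    rw [hyw] at hsupp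
    have hlhs : ⟪ν w, ζ • ν₀⟫ = ζ * ⟪ν w, ν₀⟫ := real_inner_smul_right _ _ _
    have hrhs : ‖ζ • ν₀‖ = ζ := by
      rw [norm_smul, hν₀, mul_one, Real.norm_eq_abs, abs_of_pos hζ0]
    rw [hlhs, hrhs] at hsupp
    have hfin : ζ * (3 / 4) < ζ * ⟪ν w, ν₀⟫ := (mul_lt_mul_iff_of_pos_left hζ0).2 hνw
    linarith
end
end

section
/- Let Ω ⊂ ℝⁿ be a bounded open domain with C¹ boundary and let u ∈ C²(Ω) ∩ C¹(Ω̄) be a solution of the Monge–Ampère equation det(∇²u) = f(x, u, ∇u) in Ω, where f is continuous and nonnegative on the relevant arguments, and assume inf_{∂Ω} ∂u/∂ν > 0. Then inf_{∂Ω} ∂u/∂ν ≤ ( (1/|B₁|) ∫_{Γ_u} |f(x, u(x), ∇u(x))| dx )^{1/n}. -/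
open MeasureTheory Metric
open scoped RealInnerProductSpace

noncomputable section

/-- The Hessian matrix `∇²u(x)` of `u : ℝⁿ → ℝ` at `x`. -/
def hessianMatrix {n : ℕ} (u : EuclideanSpace ℝ (Fin n) → ℝ)
    (x : EuclideanSpace ℝ (Fin n)) : Matrix (Fin n) (Fin n) ℝ :=
  Matrix.of fun i j =>
    iteratedFDeriv ℝ 2 u x ![EuclideanSpace.single i 1, EuclideanSpace.single j 1]

theorem aux_ball_subset {n : ℕ}
    (Ω : Set (EuclideanSpace ℝ (Fin n))) (hΩo : IsOpen Ω)
    (hΩb : Bornology.IsBounded Ω) (hΩne : Ω.Nonempty)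
    (ν : EuclideanSpace ℝ (Fin n) → EuclideanSpace ℝ (Fin n))
    (hν : IsOutwardUnitNormal Ω ν)
    (u : EuclideanSpace ℝ (Fin n) → ℝ)
    (G : EuclideanSpace ℝ (Fin n) → EuclideanSpace ℝ (Fin n))
    (hu : ContinuousOn u (closure Ω))
    (hG : ∀ x ∈ Ω, HasGradientAt u (G x) x)
    (hGc : ContinuousOn G (closure Ω))
    {m : ℝ} (hm : 0 < m)
    (hm_le : ∀ x ∈ frontier Ω, m ≤ ⟪G x, ν x⟫) :
    Metric.ball (0 : EuclideanSpace ℝ (Fin n)) m ⊆ G '' lowerContactSet Ω u G := by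
  intro p hp
  rw [Metric.mem_ball, dist_zero_right] at hp
  obtain ⟨w, hw⟩ : ∃ w : EuclideanSpace ℝ (Fin n) → ℝ, w = fun y => u y - ⟪p, y⟫ := ⟨_, rfl⟩
  have hwc : ContinuousOn w (closure Ω) := by
    rw [hw]
    exact hu.sub (Continuous.continuousOn (continuous_const.inner continuous_id))
  have hclc : IsCompact (closure Ω) := hΩb.isCompact_closure
  obtain ⟨x₀, hx₀, hmin⟩ := hclc.exists_isMinOn (hΩne.mono subset_closure) hwc
  by_cases hx₀Ω : x₀ ∈ Ω
  · -- interior minimum: gradient vanishes, contact point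
    have hloc : IsLocalMin w x₀ :=
      hmin.isLocalMin (Filter.mem_of_superset (hΩo.mem_nhds hx₀Ω) subset_closure)
    have hgrad : HasGradientAt w (G x₀ - p) x₀ := by
      have h1 : HasFDerivAt u (InnerProductSpace.toDual ℝ _ (G x₀)) x₀ :=
        (hG x₀ hx₀Ω).hasFDerivAt
      have h2 : HasFDerivAt (fun y : EuclideanSpace ℝ (Fin n) => ⟪p, y⟫)
          (InnerProductSpace.toDual ℝ _ p) x₀ := by
        have := (innerSL ℝ p).hasFDerivAt (x := x₀)
        convert this using 1
        ext v; simp [InnerProductSpace.toDual_apply_apply]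
        ext v; simp [InnerProductSpace.toDual_apply_apply]
      rw [hasGradientAt_iff_hasFDerivAt, hw]
      have : InnerProductSpace.toDual ℝ (EuclideanSpace ℝ (Fin n)) (G x₀ - p)
          = InnerProductSpace.toDual ℝ _ (G x₀) - InnerProductSpace.toDual ℝ _ p := by
        simp
      rw [this]
      exact h1.sub h2
    have hz : G x₀ - p = 0 := by
      have h0 := hloc.hasFDerivAt_eq_zero hgrad.hasFDerivAt
      exact (LinearIsometryEquiv.map_eq_zero_iff _).mp h0
    have hGx₀ : G x₀ = p := by rwa [sub_eq_zero] at hz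
    refine ⟨x₀, ⟨hx₀Ω, fun y hy => ?_⟩, hGx₀⟩
    have h3 : w x₀ ≤ w y := hmin hy
    simp only [hw] at h3
    rw [hGx₀, inner_sub_right]
    linarith [h3]
  · exfalso
    have hfr_eq : frontier Ω = closure Ω \ Ω := by
      rw [frontier, hΩo.interior_eq]
    have hx₀fr : x₀ ∈ frontier Ω := by rw [hfr_eq]; exact ⟨hx₀, hx₀Ω⟩
    obtain ⟨hν_norm, hν_cone⟩ := hν.2 x₀ hx₀fr
    obtain ⟨ν₀, hν₀⟩ : ∃ v, v = ν x₀ := ⟨_, rfl⟩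
    rw [← hν₀] at hν_norm hν_cone
    obtain ⟨c, hc⟩ : ∃ c, c = m - ‖p‖ := ⟨_, rfl⟩
    have hcpos : 0 < c := by rw [hc]; linarith
    -- a ball on which ⟪G ·, ν₀⟫ is large
    have hGν : ContinuousWithinAt (fun y => ⟪G y, ν₀⟫) (closure Ω) x₀ :=
      (hGc.inner continuousOn_const) x₀ hx₀
    have h1 : ∀ᶠ y in nhdsWithin x₀ (closure Ω), ⟪G y, ν₀⟫ ∈ Set.Ioi (m - c/4) := by
      apply hGν
      apply Ioi_mem_nhds
      have := hm_le x₀ hx₀fr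
      simp only [hν₀]
      linarith
    obtain ⟨r₁, hr₁pos, hr₁⟩ := Metric.mem_nhdsWithin_iff.mp h1
    -- a ball on which ν is close to ν₀
    have hνx : ContinuousWithinAt ν (frontier Ω) x₀ := hν.1 x₀ hx₀fr
    have h2 : ∀ᶠ y in nhdsWithin x₀ (frontier Ω), dist (ν y) ν₀ < 4⁻¹ := by
      have h2' : Filter.Tendsto ν (nhdsWithin x₀ (frontier Ω)) (nhds ν₀) := by
        rw [hν₀]; exact hνx
      exact Metric.tendsto_nhds.mp h2' 4⁻¹ (by norm_num)
    obtain ⟨r₂, hr₂pos, hr₂⟩ := Metric.mem_nhdsWithin_iff.mp h2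
    obtain ⟨ρ, hρ⟩ : ∃ ρ, ρ = min r₁ r₂ := ⟨_, rfl⟩
    have hρpos : 0 < ρ := by rw [hρ]; exact lt_min hr₁pos hr₂pos
    have hρ₁ : ρ ≤ r₁ := by rw [hρ]; exact min_le_left _ _
    have hρ₂ : ρ ≤ r₂ := by rw [hρ]; exact min_le_right _ _
    -- a ball on which w is nearly minimal
    have hwx : ContinuousWithinAt w (closure Ω) x₀ := hwc x₀ hx₀
    have h3 : ∀ᶠ y in nhdsWithin x₀ (closure Ω), w y ∈ Set.Iio (w x₀ + c/2 * (ρ/8)) := by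
      apply hwx
      apply Iio_mem_nhds
      have h0 : 0 < c/2 * (ρ/8) := mul_pos (by linarith) (by linarith)
      linarith
    obtain ⟨r₃, hr₃pos, hr₃⟩ := Metric.mem_nhdsWithin_iff.mp h3
    -- choose an interior point z close to x₀
    obtain ⟨z, hzΩ, hzd⟩ : ∃ z ∈ Ω, dist z x₀ < min (ρ/8) r₃ := by
      obtain ⟨z, hz1, hz2⟩ := Metric.mem_closure_iff.mp hx₀ (min (ρ/8) r₃)
        (lt_min (by positivity) hr₃pos)
      exact ⟨z, hz1, by rwa [dist_comm]⟩
    -- the inward ray from z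
    obtain ⟨ℓ, hℓ⟩ : ∃ ℓ : ℝ → EuclideanSpace ℝ (Fin n), ℓ = fun t => z - t • ν₀ := ⟨_, rfl⟩
    have hℓdist : ∀ t, dist (ℓ t) z = |t| := by
      intro t
      simp [hℓ, dist_eq_norm, norm_smul, hν_norm]
    have hℓℓ : ∀ s t : ℝ, ℓ s - ℓ t = (t - s) • ν₀ := by
      intro s t
      simp only [hℓ]
      rw [sub_smul]
      abel
    obtain ⟨S, hS⟩ : ∃ S : Set ℝ, S = {t : ℝ | 0 ≤ t ∧ ℓ t ∉ Ω} := ⟨_, rfl⟩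
    have hSne : S.Nonempty := by
      rw [hS]
      obtain ⟨R, hR⟩ := hΩb.subset_ball 0
      refine ⟨|R| + ‖z‖ + 1, ⟨by positivity, fun hmem => ?_⟩⟩
      have h5 := hR hmem
      rw [Metric.mem_ball, dist_zero_right] at h5
      have h6 : ‖(|R| + ‖z‖ + 1) • ν₀‖ - ‖z‖ ≤ ‖ℓ (|R| + ‖z‖ + 1)‖ := by
        have := norm_sub_norm_le ((|R| + ‖z‖ + 1) • ν₀) z
        calc ‖(|R| + ‖z‖ + 1) • ν₀‖ - ‖z‖ ≤ ‖(|R| + ‖z‖ + 1) • ν₀ - z‖ := this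
        _ = ‖ℓ (|R| + ‖z‖ + 1)‖ := by rw [hℓ]; simp only [← norm_neg ((|R| + ‖z‖ + 1) • ν₀ - z)]; congr 1; abel
      rw [norm_smul, hν_norm] at h6
      have h7 : |R| + ‖z‖ + 1 ≤ ‖(|R| + ‖z‖ + 1)‖ := le_abs_self _
      have h8 : R ≤ |R| := le_abs_self R
      simp only [Real.norm_eq_abs] at h6 h7
      linarith
    have hSbd : BddBelow S := ⟨0, fun t ht => by rw [hS] at ht; exact ht.1⟩
    obtain ⟨T, hT⟩ : ∃ T, T = sInf S := ⟨_, rfl⟩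
    have hmemΩ : ∀ t, 0 ≤ t → t < T → ℓ t ∈ Ω := by
      intro t ht hlt
      by_contra h
      have hmem : t ∈ S := by rw [hS]; exact ⟨ht, h⟩
      rw [hT] at hlt
      exact absurd (csInf_le hSbd hmem) (not_le.mpr hlt)
    have hTpos : 0 < T := by
      obtain ⟨ε, hε, hball⟩ := Metric.isOpen_iff.mp hΩo z hzΩ
      rw [hT]
      refine lt_of_lt_of_le hε (le_csInf hSne ?_)
      intro s hs
      rw [hS] at hs
      by_contra hns
      push_neg at hns
      refine hs.2 (hball ?_)
      rw [Metric.mem_ball, hℓdist, abs_of_nonneg hs.1]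
      exact hns
    have hℓT_cl : ℓ T ∈ closure Ω := by
      have hcont : Continuous ℓ := by
        simp only [hℓ]
        exact continuous_const.sub (continuous_id.smul continuous_const)
      have ht : Filter.Tendsto ℓ (nhdsWithin T (Set.Iio T)) (nhds (ℓ T)) :=
        (hcont.tendsto T).mono_left nhdsWithin_le_nhds
      apply mem_closure_of_tendsto ht
      filter_upwards [Ioo_mem_nhdsLT hTpos] with t ht'
      exact hmemΩ t ht'.1.le ht'.2
    have hℓT_not : ℓ T ∉ Ω := by
      intro hmem
      obtain ⟨ε, hε, hball⟩ := Metric.isOpen_iff.mp hΩo (ℓ T) hmem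
      obtain ⟨s, hsS, hslt⟩ := (csInf_lt_iff hSbd hSne).mp (show sInf S < T + ε by rw [← hT]; linarith)
      have hsT : T ≤ s := by rw [hT]; exact csInf_le hSbd hsS
      rw [hS] at hsS
      refine hsS.2 (hball ?_)
      rw [Metric.mem_ball, dist_eq_norm, hℓℓ, norm_smul, hν_norm, mul_one, Real.norm_eq_abs,
        abs_of_nonpos (by linarith)]
      linarith
    obtain ⟨τ, hτ⟩ : ∃ τ, τ = min T (ρ/4) := ⟨_, rfl⟩
    have hτpos : 0 < τ := by rw [hτ]; exact lt_min hTpos (by positivity)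
    have hτle : τ ≤ T := by rw [hτ]; exact min_le_left _ _
    have hτρ : τ ≤ ρ/4 := by rw [hτ]; exact min_le_right _ _
    have hseg_cl : ∀ t ∈ Set.Icc 0 τ, ℓ t ∈ closure Ω := by
      rintro t ⟨ht0, ht1⟩
      rcases eq_or_lt_of_le (le_trans ht1 hτle) with h | h
      · rw [h]; exact hℓT_cl
      · exact subset_closure (hmemΩ t ht0 h)
    have hzx₀ : dist z x₀ < ρ/8 := lt_of_lt_of_le hzd (min_le_left _ _)
    have hseg_ball : ∀ t ∈ Set.Icc 0 τ, dist (ℓ t) x₀ < ρ := by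
      rintro t ⟨ht0, ht1⟩
      calc dist (ℓ t) x₀ ≤ dist (ℓ t) z + dist z x₀ := dist_triangle _ _ _
        _ < |t| + ρ/8 := by rw [hℓdist]; linarith
        _ ≤ ρ/4 + ρ/8 := by rw [abs_of_nonneg ht0]; linarith [le_trans ht1 hτρ]
        _ < ρ := by linarith
    -- derivative computation
    have hderiv : ∀ t ∈ Set.Ioo (0:ℝ) τ,
        HasDerivAt (fun s => w (ℓ s) + c/2 * s) (-⟪G (ℓ t), ν₀⟫ + ⟪p, ν₀⟫ + c/2) t := by
      intro t ht
      simp only [hw]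
      have htΩ : ℓ t ∈ Ω := hmemΩ t ht.1.le (lt_of_lt_of_le ht.2 hτle)
      have hℓd : HasDerivAt ℓ (-ν₀) t := by
        rw [hℓ]
        have h1 : HasDerivAt (fun s : ℝ => s • ν₀) ((1:ℝ) • ν₀) t := (hasDerivAt_id t).smul_const ν₀
        have h2 := h1.const_sub z
        simpa using h2
      have hud : HasDerivAt (fun s => u (ℓ s)) (⟪G (ℓ t), -ν₀⟫) t := by
        have := ((hG (ℓ t) htΩ).hasFDerivAt.comp_hasDerivAt t hℓd)
        simp [InnerProductSpace.toDual_apply_apply] at this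
        rw [inner_neg_right]
        exact this
      have hpd : HasDerivAt (fun s => (⟪p, ℓ s⟫ : ℝ)) (⟪p, -ν₀⟫) t := by
        have := ((innerSL ℝ p).hasFDerivAt.comp_hasDerivAt t hℓd)
        simp at this
        rw [inner_neg_right]
        exact this
      have hlin : HasDerivAt (fun s : ℝ => c/2 * s) (c/2) t := by
        simpa using (hasDerivAt_id t).const_mul (c/2)
      have := (hud.sub hpd).add hlin
      exact this.congr_deriv (by rw [inner_neg_right, inner_neg_right]; ring)
    have hmaps : Set.MapsTo ℓ (Set.Icc 0 τ) (closure Ω) := fun t ht => hseg_cl t ht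
    have hanti : AntitoneOn (fun s => w (ℓ s) + c/2 * s) (Set.Icc 0 τ) := by
      apply antitoneOn_of_deriv_nonpos (convex_Icc 0 τ)
      · apply ContinuousOn.add
        · refine hwc.comp ?_ hmaps
          apply Continuous.continuousOn
          simp only [hℓ]
          exact continuous_const.sub (continuous_id.smul continuous_const)
        · exact (continuous_const.mul continuous_id).continuousOn
      · intro t ht
        rw [interior_Icc] at ht
        exact ((hderiv t ht).differentiableAt).differentiableWithinAt
      · intro t ht
        rw [interior_Icc] at ht
        rw [(hderiv t ht).deriv]
        have hball' : dist (ℓ t) x₀ < ρ := hseg_ball t ⟨ht.1.le, ht.2.le⟩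
        have hcl' : ℓ t ∈ closure Ω := hseg_cl t ⟨ht.1.le, ht.2.le⟩
        have hin : ⟪G (ℓ t), ν₀⟫ ∈ Set.Ioi (m - c/4) := by
          apply hr₁
          exact ⟨Metric.mem_ball.mpr (lt_of_lt_of_le hball' hρ₁), hcl'⟩
        have hpν : ⟪p, ν₀⟫ ≤ ‖p‖ := by
          calc ⟪p, ν₀⟫ ≤ ‖p‖ * ‖ν₀‖ := real_inner_le_norm p ν₀
          _ = ‖p‖ := by rw [hν_norm, mul_one]
        rw [Set.mem_Ioi] at hin
        simp only [hc] at *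
        linarith
    have hℓ0 : ℓ 0 = z := by simp [hℓ]
    have hkey : w (ℓ τ) + c/2 * τ ≤ w z := by
      have h9 : w (ℓ τ) + c/2 * τ ≤ w (ℓ 0) + c/2 * 0 :=
        hanti (Set.left_mem_Icc.mpr hτpos.le) (Set.right_mem_Icc.mpr hτpos.le) hτpos.le
      rw [hℓ0] at h9
      linarith
    have hwlow : w x₀ ≤ w (ℓ τ) := hmin (hseg_cl τ (Set.right_mem_Icc.mpr hτpos.le))
    have hwzup : w z < w x₀ + c/2 * (ρ/8) := by
      have : w z ∈ Set.Iio (w x₀ + c/2 * (ρ/8)) := by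
        apply hr₃
        refine ⟨Metric.mem_ball.mpr (lt_of_lt_of_le hzd (min_le_right _ _)), subset_closure hzΩ⟩
      exact this
    have hτlt : τ < ρ/8 := by
      by_contra hcon
      push_neg at hcon
      have h10 : c/2 * (ρ/8) ≤ c/2 * τ := mul_le_mul_of_nonneg_left hcon (by linarith)
      have h12 : w x₀ + c/2 * (ρ/8) ≤ w x₀ + c/2 * τ := by linarith
      have h13 : w x₀ + c/2 * τ ≤ w (ℓ τ) + c/2 * τ := by linarith
      exact absurd (lt_of_le_of_lt (h12.trans (h13.trans hkey)) hwzup) (lt_irrefl _)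
    have hTlt : T < ρ/8 := by
      rcases le_or_gt T (ρ/4) with h | h
      · rwa [hτ, min_eq_left h] at hτlt
      · exfalso
        rw [hτ, min_eq_right h.le] at hτlt
        linarith
    -- the exit point y
    obtain ⟨y, hy⟩ : ∃ y, y = ℓ T := ⟨_, rfl⟩
    have hyfr : y ∈ frontier Ω := by rw [hfr_eq, hy]; exact ⟨hℓT_cl, hℓT_not⟩
    have hydist : dist y x₀ < ρ := by
      calc dist y x₀ ≤ dist y z + dist z x₀ := dist_triangle _ _ _
        _ < ρ/8 + ρ/8 := by
            rw [hy, hℓdist, abs_of_nonneg hTpos.le]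
            have := hzx₀
            linarith
        _ < ρ := by linarith
    have hνy : ‖ν y - ν₀‖ < 4⁻¹ := by
      have h19 : dist (ν y) ν₀ < 4⁻¹ :=
        hr₂ ⟨Metric.mem_ball.mpr (lt_of_lt_of_le hydist hρ₂), hyfr⟩
      rwa [dist_eq_norm] at h19
    obtain ⟨hνy_norm, hcone_y⟩ := hν.2 y hyfr
    obtain ⟨δ, hδpos, hδ⟩ := hcone_y (1/2) (by norm_num)
    obtain ⟨s₀, hs₀⟩ : ∃ s₀, s₀ = min (δ/2) (T/2) := ⟨_, rfl⟩
    have hs₀pos : 0 < s₀ := by rw [hs₀]; exact lt_min (by linarith) (by linarith)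
    have hs₀δ : s₀ < δ := by rw [hs₀]; exact lt_of_le_of_lt (min_le_left _ _) (by linarith)
    have hs₀T : s₀ ≤ T/2 := by rw [hs₀]; exact min_le_right _ _
    have hq : ℓ (T - s₀) ∈ Ω := hmemΩ _ (by linarith) (by linarith)
    have hqy : ℓ (T - s₀) - y = s₀ • ν₀ := by
      rw [hy, hℓℓ]
      congr 1
      ring
    have happ : ⟪ν y, ℓ (T - s₀) - y⟫ ≤ 1/2 * ‖ℓ (T - s₀) - y‖ := by
      apply hδ _ (subset_closure hq)
      rw [dist_eq_norm, hqy, norm_smul, hν_norm, Real.norm_eq_abs, abs_of_nonneg hs₀pos.le, mul_one]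
      exact hs₀δ
    rw [hqy, real_inner_smul_right, norm_smul, hν_norm, Real.norm_eq_abs,
      abs_of_nonneg hs₀pos.le, mul_one] at happ
    have hip : ⟪ν y, ν₀⟫ ≤ 1/2 := by
      have h11 : s₀ * ⟪ν y, ν₀⟫ ≤ s₀ * (1/2) := by linarith
      exact le_of_mul_le_mul_left h11 hs₀pos
    have hsq : ‖ν y - ν₀‖ ^ 2 = ‖ν y‖ ^ 2 - 2 * ⟪ν y, ν₀⟫ + ‖ν₀‖ ^ 2 := norm_sub_sq_real (ν y) ν₀
    rw [hνy_norm, hν_norm] at hsq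
    have h20 : ‖ν y - ν₀‖ ^ 2 < 4⁻¹ ^ 2 :=
      pow_lt_pow_left₀ hνy (norm_nonneg _) (by norm_num)
    have h21 : ((4:ℝ)⁻¹) ^ 2 = 1/16 := by norm_num
    linarith [hsq, h20, hip]


theorem aux_fderiv {n : ℕ}
    (Ω : Set (EuclideanSpace ℝ (Fin n))) (hΩo : IsOpen Ω)
    (u : EuclideanSpace ℝ (Fin n) → ℝ)
    (G : EuclideanSpace ℝ (Fin n) → EuclideanSpace ℝ (Fin n))
    (hu2 : ContDiffOn ℝ 2 u Ω)
    (hG : ∀ x ∈ Ω, HasGradientAt u (G x) x) :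
    ∃ G' : EuclideanSpace ℝ (Fin n) → (EuclideanSpace ℝ (Fin n) →L[ℝ] EuclideanSpace ℝ (Fin n)),
      ∀ x ∈ Ω, HasFDerivAt G (G' x) x ∧ (G' x).det = (hessianMatrix u x).det := by
  classical
  let Aeq : (EuclideanSpace ℝ (Fin n) →L[ℝ] ℝ) ≃L[ℝ] EuclideanSpace ℝ (Fin n) :=
    (InnerProductSpace.toDual ℝ (EuclideanSpace ℝ (Fin n))).symm.toContinuousLinearEquiv
  let A : (EuclideanSpace ℝ (Fin n) →L[ℝ] ℝ) →L[ℝ] EuclideanSpace ℝ (Fin n) :=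
    (Aeq : (EuclideanSpace ℝ (Fin n) →L[ℝ] ℝ) →L[ℝ] EuclideanSpace ℝ (Fin n))
  have hAv : ∀ v, A (InnerProductSpace.toDual ℝ _ v) = v := by
    intro v
    simp [A, Aeq]
  have hAφ : ∀ (φ : EuclideanSpace ℝ (Fin n) →L[ℝ] ℝ) (i : Fin n),
      (A φ) i = φ (EuclideanSpace.single i 1) := by
    intro φ i
    have h1 : φ = InnerProductSpace.toDual ℝ _ (A φ) := by simp [A, Aeq]
    conv_rhs => rw [h1]
    rw [InnerProductSpace.toDual_apply_apply, EuclideanSpace.inner_single_right]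
    simp
  refine ⟨fun x => A.comp (fderiv ℝ (fderiv ℝ u) x), fun x hx => ?_⟩
  have hD : ContDiffOn ℝ 1 (fun y => fderiv ℝ u y) Ω := hu2.fderiv_of_isOpen hΩo (by norm_num)
  have hdiff : DifferentiableAt ℝ (fun y => fderiv ℝ u y) x :=
    (hD.differentiableOn (by norm_num)).differentiableAt (hΩo.mem_nhds hx)
  have hDx : HasFDerivAt (fun y => fderiv ℝ u y) (fderiv ℝ (fderiv ℝ u) x) x := hdiff.hasFDerivAt
  have hcomp : HasFDerivAt (fun y => A (fderiv ℝ u y))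
      (A.comp (fderiv ℝ (fderiv ℝ u) x)) x := A.hasFDerivAt.comp x hDx
  have hfd : ∀ y ∈ Ω, fderiv ℝ u y = InnerProductSpace.toDual ℝ _ (G y) :=
    fun y hy => ((hG y hy).hasFDerivAt).fderiv
  have heq : (fun y => A (fderiv ℝ u y)) =ᶠ[nhds x] G := by
    filter_upwards [hΩo.mem_nhds hx] with y hy
    rw [hfd y hy]
    exact hAv (G y)
  refine ⟨hcomp.congr_of_eventuallyEq heq.symm, ?_⟩
  -- determinant identity
  have hmat : LinearMap.toMatrix (EuclideanSpace.basisFun (Fin n) ℝ).toBasis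
      (EuclideanSpace.basisFun (Fin n) ℝ).toBasis
      ((A.comp (fderiv ℝ (fderiv ℝ u) x)) :
        EuclideanSpace ℝ (Fin n) →ₗ[ℝ] EuclideanSpace ℝ (Fin n)) = (hessianMatrix u x).transpose := by
    ext i j
    rw [LinearMap.toMatrix_apply]
    have hbj : (EuclideanSpace.basisFun (Fin n) ℝ).toBasis j = EuclideanSpace.single j 1 := by
      rw [OrthonormalBasis.coe_toBasis, EuclideanSpace.basisFun_apply]
    rw [hbj]
    have hrepr : ∀ v : EuclideanSpace ℝ (Fin n),
        (EuclideanSpace.basisFun (Fin n) ℝ).toBasis.repr v i = v i := by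
      intro v
      rw [OrthonormalBasis.coe_toBasis_repr_apply, EuclideanSpace.basisFun_repr]
    rw [ContinuousLinearMap.coe_coe, ContinuousLinearMap.comp_apply, hrepr, hAφ]
    rw [Matrix.transpose_apply]
    show _ = hessianMatrix u x j i
    rw [hessianMatrix, Matrix.of_apply, iteratedFDeriv_two_apply]
    simp
  show (A.comp (fderiv ℝ (fderiv ℝ u) x)).det = (hessianMatrix u x).det
  rw [ContinuousLinearMap.det,
    ← LinearMap.det_toMatrix (EuclideanSpace.basisFun (Fin n) ℝ).toBasis, hmat,
    Matrix.det_transpose]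


theorem aux_meas {n : ℕ} (Ω : Set (EuclideanSpace ℝ (Fin n))) (hΩo : IsOpen Ω)
    (u : EuclideanSpace ℝ (Fin n) → ℝ)
    (G : EuclideanSpace ℝ (Fin n) → EuclideanSpace ℝ (Fin n))
    (hu : ContinuousOn u (closure Ω)) (hGc : ContinuousOn G (closure Ω)) :
    MeasurableSet (lowerContactSet Ω u G) := by
  have heq : lowerContactSet Ω u G = Ω ∩ ⋂ y ∈ closure Ω,
      (closure Ω ∩ (fun x => u x + ⟪G x, y - x⟫ - u y) ⁻¹' Set.Iic 0) := by
    ext x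
    simp only [lowerContactSet, Set.mem_setOf_eq, Set.mem_inter_iff, Set.mem_iInter,
      Set.mem_preimage, Set.mem_Iic]
    constructor
    · rintro ⟨hxΩ, h⟩
      exact ⟨hxΩ, fun y hy => ⟨subset_closure hxΩ, by linarith [h y hy]⟩⟩
    · rintro ⟨hxΩ, h⟩
      exact ⟨hxΩ, fun y hy => by linarith [(h y hy).2]⟩
  rw [heq]
  refine hΩo.measurableSet.inter (IsClosed.measurableSet ?_)
  refine isClosed_biInter (fun y hy => ?_)
  refine ContinuousOn.preimage_isClosed_of_isClosed ?_ isClosed_closure isClosed_Iic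
  exact (hu.add (hGc.inner ((continuous_const.sub continuous_id).continuousOn))).sub
    continuousOn_const

theorem stmt15 {n : ℕ} (hn : 0 < n)
    (Ω : Set (EuclideanSpace ℝ (Fin n))) (hΩo : IsOpen Ω)
    (hΩb : Bornology.IsBounded Ω) (hΩne : Ω.Nonempty)
    (ν : EuclideanSpace ℝ (Fin n) → EuclideanSpace ℝ (Fin n))
    (hν : IsOutwardUnitNormal Ω ν)
    -- `f = f(x, s, q)` continuous and nonnegative
    (f : EuclideanSpace ℝ (Fin n) → ℝ → EuclideanSpace ℝ (Fin n) → ℝ)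
    (hf_cont : Continuous fun q : EuclideanSpace ℝ (Fin n) × ℝ × EuclideanSpace ℝ (Fin n) =>
      f q.1 q.2.1 q.2.2)
    (hf_nonneg : ∀ x s q, 0 ≤ f x s q)
    (u : EuclideanSpace ℝ (Fin n) → ℝ)
    (G : EuclideanSpace ℝ (Fin n) → EuclideanSpace ℝ (Fin n))
    -- `u ∈ C²(Ω) ∩ C¹(Ω̄)`
    (hu2 : ContDiffOn ℝ 2 u Ω)
    (hu : ContinuousOn u (closure Ω))
    (hG : ∀ x ∈ Ω, HasGradientAt u (G x) x)
    (hGc : ContinuousOn G (closure Ω))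
    -- `det(∇²u) = f(x, u, ∇u)` in `Ω`
    (heq : ∀ x ∈ Ω, (hessianMatrix u x).det = f x (u x) (G x))
    -- `inf_{∂Ω} ∂u/∂ν > 0`
    (hinf : 0 < sInf ((fun x => ⟪G x, ν x⟫) '' frontier Ω)) :
    sInf ((fun x => ⟪G x, ν x⟫) '' frontier Ω) ≤
      ((1 / (volume (Metric.ball (0 : EuclideanSpace ℝ (Fin n)) 1)).toReal) *
        ∫ x in lowerContactSet Ω u G, |f x (u x) (G x)|) ^ ((n : ℝ)⁻¹) := by
  classical
  set m := sInf ((fun x => ⟪G x, ν x⟫) '' frontier Ω) with hmdef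
  have hm : 0 < m := hinf
  have hclc : IsCompact (closure Ω) := hΩb.isCompact_closure
  have hfrc : IsCompact (frontier Ω) :=
    hclc.of_isClosed_subset isClosed_frontier frontier_subset_closure
  have hcont_fr : ContinuousOn (fun x => ⟪G x, ν x⟫) (frontier Ω) :=
    (hGc.mono frontier_subset_closure).inner hν.1
  have hbdd : BddBelow ((fun x => ⟪G x, ν x⟫) '' frontier Ω) :=
    (hfrc.image_of_continuousOn hcont_fr).bddBelow
  have hm_le : ∀ x ∈ frontier Ω, m ≤ ⟪G x, ν x⟫ := fun x hx => csInf_le hbdd ⟨x, hx, rfl⟩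
  have hball := aux_ball_subset Ω hΩo hΩb hΩne ν hν u G hu hG hGc hm hm_le
  obtain ⟨G', hG'⟩ := aux_fderiv Ω hΩo u G hu2 hG
  have hΓm : MeasurableSet (lowerContactSet Ω u G) := aux_meas Ω hΩo u G hu hGc
  have hΓsub : lowerContactSet Ω u G ⊆ Ω := fun x hx => hx.1
  have h1 : volume (Metric.ball (0 : EuclideanSpace ℝ (Fin n)) m) ≤
      volume (G '' lowerContactSet Ω u G) := measure_mono hball
  have h2 : volume (G '' lowerContactSet Ω u G) ≤
      ∫⁻ x in lowerContactSet Ω u G, ENNReal.ofReal |(G' x).det| :=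
    MeasureTheory.addHaar_image_le_lintegral_abs_det_fderiv volume hΓm
      (fun x hx => ((hG' x (hΓsub hx)).1).hasFDerivWithinAt)
  have h3 : ∫⁻ x in lowerContactSet Ω u G, ENNReal.ofReal |(G' x).det| =
      ∫⁻ x in lowerContactSet Ω u G, ENNReal.ofReal (f x (u x) (G x)) := by
    apply setLIntegral_congr_fun hΓm
    intro x hx
    dsimp only
    rw [(hG' x (hΓsub hx)).2, heq x (hΓsub hx), abs_of_nonneg (hf_nonneg _ _ _)]
  have hfc : ContinuousOn (fun x => f x (u x) (G x)) (closure Ω) :=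
    hf_cont.comp_continuousOn (continuousOn_id.prodMk (hu.prodMk hGc))
  have hInt : IntegrableOn (fun x => f x (u x) (G x)) (lowerContactSet Ω u G) volume :=
    (hfc.integrableOn_compact hclc).mono_set (hΓsub.trans subset_closure)
  have h4 : ∫⁻ x in lowerContactSet Ω u G, ENNReal.ofReal (f x (u x) (G x)) =
      ENNReal.ofReal (∫ x in lowerContactSet Ω u G, f x (u x) (G x)) :=
    (MeasureTheory.ofReal_integral_eq_lintegral_ofReal hInt
      (Filter.Eventually.of_forall fun x => hf_nonneg _ _ _)).symm
  haveI : Nontrivial (EuclideanSpace ℝ (Fin n)) := by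
    refine ⟨⟨EuclideanSpace.single (⟨0, hn⟩ : Fin n) (1:ℝ), 0, fun hc => ?_⟩⟩
    have h7 : ‖EuclideanSpace.single (⟨0, hn⟩ : Fin n) (1:ℝ)‖ = 1 := by
      rw [EuclideanSpace.norm_single]
      norm_num
    rw [hc] at h7
    simp at h7
  have h5 : volume (Metric.ball (0 : EuclideanSpace ℝ (Fin n)) m) =
      ENNReal.ofReal (m ^ n) * volume (Metric.ball (0 : EuclideanSpace ℝ (Fin n)) 1) := by
    have := MeasureTheory.Measure.addHaar_ball (volume : Measure (EuclideanSpace ℝ (Fin n)))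
      (0 : EuclideanSpace ℝ (Fin n)) hm.le
    rwa [finrank_euclideanSpace_fin] at this
  have hJ0 : 0 ≤ ∫ x in lowerContactSet Ω u G, f x (u x) (G x) :=
    setIntegral_nonneg hΓm (fun x _ => hf_nonneg _ _ _)
  have key : ENNReal.ofReal (m ^ n) * volume (Metric.ball (0 : EuclideanSpace ℝ (Fin n)) 1) ≤
      ENNReal.ofReal (∫ x in lowerContactSet Ω u G, f x (u x) (G x)) := by
    rw [← h5, ← h4, ← h3]
    exact le_trans h1 h2
  have hV0 : 0 < volume (Metric.ball (0 : EuclideanSpace ℝ (Fin n)) 1) :=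
    Metric.measure_ball_pos volume 0 one_pos
  have hVtop : volume (Metric.ball (0 : EuclideanSpace ℝ (Fin n)) 1) ≠ ⊤ :=
    measure_ball_lt_top.ne
  have hIub : m ^ n * (volume (Metric.ball (0 : EuclideanSpace ℝ (Fin n)) 1)).toReal ≤
      ∫ x in lowerContactSet Ω u G, f x (u x) (G x) := by
    have h6 := ENNReal.toReal_mono ENNReal.ofReal_ne_top key
    rwa [ENNReal.toReal_mul, ENNReal.toReal_ofReal (pow_nonneg hm.le n),
      ENNReal.toReal_ofReal hJ0] at h6
  have hVt0 : 0 < (volume (Metric.ball (0 : EuclideanSpace ℝ (Fin n)) 1)).toReal :=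
    ENNReal.toReal_pos hV0.ne' hVtop
  have habs : ∫ x in lowerContactSet Ω u G, |f x (u x) (G x)| =
      ∫ x in lowerContactSet Ω u G, f x (u x) (G x) := by
    apply setIntegral_congr_fun hΓm
    intro x _
    exact abs_of_nonneg (hf_nonneg _ _ _)
  have hmn : m ^ n ≤ 1 / (volume (Metric.ball (0 : EuclideanSpace ℝ (Fin n)) 1)).toReal *
      ∫ x in lowerContactSet Ω u G, |f x (u x) (G x)| := by
    rw [habs, one_div, inv_mul_eq_div, le_div_iff₀ hVt0]
    exact hIub
  calc m = (m ^ n) ^ ((n : ℝ)⁻¹) := by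
        rw [← Real.rpow_natCast m n, ← Real.rpow_mul hm.le,
          mul_inv_cancel₀ (Nat.cast_ne_zero.mpr hn.ne'), Real.rpow_one]
    _ ≤ (1 / (volume (Metric.ball (0 : EuclideanSpace ℝ (Fin n)) 1)).toReal *
        ∫ x in lowerContactSet Ω u G, |f x (u x) (G x)|) ^ ((n : ℝ)⁻¹) :=
      Real.rpow_le_rpow (pow_nonneg hm.le n) hmn (by positivity)
end
end

section
/- Let Ω ⊂ ℝⁿ be a bounded open domain with C¹ boundary and let u ∈ C²(Ω) ∩ C¹(Ω̄), u not identically zero, be a solution of the Monge–Ampère eigenvalue problem det(∇²u) = λ|u|ⁿ in Ω with u = 0 on ∂Ω, where λ > 0. Then λ ≥ |B₁| ( inf_{∂Ω} |∇u| / ‖u‖_{L^n(Ω)} )ⁿ. -/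
open MeasureTheory Metric
open scoped RealInnerProductSpace

noncomputable section

section Auxiliary

variable {n : ℕ}

local notation "E" => EuclideanSpace ℝ (Fin n)

/-- derivative map for G -/
def Gderiv (u : E → ℝ) (x : E) : E →L[ℝ] E :=
  ((InnerProductSpace.toDual ℝ E).symm.toContinuousLinearEquiv.toContinuousLinearMap).comp
    (fderiv ℝ (fun y => fderiv ℝ u y) x)

theorem aux1 {Ω : Set E} (hΩo : IsOpen Ω) {u : E → ℝ} {G : E → E}
    (hu2 : ContDiffOn ℝ 2 u Ω) (hG : ∀ x ∈ Ω, HasGradientAt u (G x) x)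
    {x : E} (hx : x ∈ Ω) :
    HasFDerivAt G (Gderiv u x) x ∧ (Gderiv u x).det = (hessianMatrix u x).det := by
  have hnhds : Ω ∈ nhds x := hΩo.mem_nhds hx
  have hCD : ContDiffAt ℝ 2 u x := (hu2 x hx).contDiffAt hnhds
  have hCD1 : ContDiffAt ℝ 1 (fun y => fderiv ℝ u y) x := by
    have := hCD.fderiv_right (m := 1) (by norm_num)
    exact this
  have hdiff : DifferentiableAt ℝ (fun y => fderiv ℝ u y) x := hCD1.differentiableAt one_ne_zero
  have hGeq : ∀ y ∈ Ω, G y = (InnerProductSpace.toDual ℝ E).symm (fderiv ℝ u y) := by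
    intro y hy
    have h1 : fderiv ℝ u y = InnerProductSpace.toDual ℝ E (G y) :=
      ((hG y hy).hasFDerivAt).fderiv
    rw [h1, LinearIsometryEquiv.symm_apply_apply]
  have hfd : HasFDerivAt (fun y => (InnerProductSpace.toDual ℝ E).symm (fderiv ℝ u y))
      (Gderiv u x) x := by
    exact (((InnerProductSpace.toDual ℝ E).symm.toContinuousLinearEquiv.toContinuousLinearMap).hasFDerivAt).comp x hdiff.hasFDerivAt
  constructor
  · apply hfd.congr_of_eventuallyEq
    filter_upwards [hnhds] with y hy using hGeq y hy
  · -- determinant equality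

    classical
    set b : Module.Basis (Fin n) ℝ E := (EuclideanSpace.basisFun (Fin n) ℝ).toBasis with hb
    have hM : LinearMap.toMatrix b b ((Gderiv u x) : E →ₗ[ℝ] E) = Matrix.transpose (hessianMatrix u x) := by
      ext i j
      rw [LinearMap.toMatrix_apply]
      have hbj : b j = EuclideanSpace.single j 1 := by
        rw [hb, OrthonormalBasis.coe_toBasis, EuclideanSpace.basisFun_apply]
      have hrepr : ∀ v : E, b.repr v i = v i := by
        intro v
        rw [hb, OrthonormalBasis.coe_toBasis_repr_apply, EuclideanSpace.basisFun_repr]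
      rw [hbj, hrepr]
      have : ((Gderiv u x) : E →ₗ[ℝ] E) (EuclideanSpace.single j 1)
          = (InnerProductSpace.toDual ℝ E).symm
              ((fderiv ℝ (fun y => fderiv ℝ u y) x) (EuclideanSpace.single j 1)) := rfl
      rw [this]
      have hcoord : ∀ (ℓ : StrongDual ℝ E),
          ((InnerProductSpace.toDual ℝ E).symm ℓ) i = ℓ (EuclideanSpace.single i 1) := by
        intro ℓ
        have h1 : ⟪(InnerProductSpace.toDual ℝ E).symm ℓ, EuclideanSpace.single i 1⟫
            = ℓ (EuclideanSpace.single i 1) := InnerProductSpace.toDual_symm_apply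
        have h2 : ⟪(InnerProductSpace.toDual ℝ E).symm ℓ, EuclideanSpace.single i 1⟫
            = ((InnerProductSpace.toDual ℝ E).symm ℓ) i := by
          rw [EuclideanSpace.inner_single_right]
          simp
        rw [← h2, h1]
      rw [hcoord]
      show _ = (hessianMatrix u x) j i
      show _ = iteratedFDeriv ℝ 2 u x ![EuclideanSpace.single j 1, EuclideanSpace.single i 1]
      rw [iteratedFDeriv_two_apply]
      simp
    show LinearMap.det ((Gderiv u x) : E →ₗ[ℝ] E) = _
    rw [← LinearMap.det_toMatrix b, hM, Matrix.det_transpose]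

/-- Walking from an interior point in direction `e` (unit vector), either we stay in `Ω`
for time `T`, or we exit through the frontier. -/
theorem ray_exit {Ω : Set E} (hΩo : IsOpen Ω) {w : E} (hw : w ∈ Ω) {e : E}
    (he : ‖e‖ = 1) {T : ℝ} (hT : 0 < T) :
    ∃ t : ℝ, 0 < t ∧ t ≤ T ∧ (∀ h, 0 ≤ h → h < t → w + h • e ∈ Ω) ∧
      (w + t • e ∈ closure Ω) ∧ (t < T → w + t • e ∈ frontier Ω) := by
  classical
  set Bad : Set ℝ := {s : ℝ | s ∈ Set.Icc 0 T ∧ w + s • e ∉ Ω} ∪ {T} with hBad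
  have hTBad : T ∈ Bad := Set.mem_union_right _ rfl
  have hne : Bad.Nonempty := ⟨T, hTBad⟩
  have hbdd : BddBelow Bad := by
    refine ⟨0, fun s hs => ?_⟩
    rcases hs with hs | hs
    · exact hs.1.1
    · simp only [Set.mem_singleton_iff] at hs; rw [hs]; exact hT.le
  set t := sInf Bad with ht
  have htT : t ≤ T := csInf_le hbdd hTBad
  have hdist : ∀ s : ℝ, dist (w + s • e) w = |s| := by
    intro s
    rw [dist_eq_norm]
    simp [norm_smul, he]
  have hin : ∀ h, 0 ≤ h → h < t → w + h • e ∈ Ω := by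
    intro h h0 hht
    by_contra hbad
    have : h ∈ Bad := Set.mem_union_left _ ⟨⟨h0, le_trans hht.le htT⟩, hbad⟩
    exact absurd (csInf_le hbdd this) (not_le.mpr hht)
  have ht0 : 0 < t := by
    obtain ⟨r, hr0, hball⟩ := Metric.isOpen_iff.1 hΩo w hw
    have : min (r / 2) T ≤ t := by
      apply le_csInf hne
      intro s hs
      rcases hs with hs | hs
      · by_contra hlt
        push_neg at hlt
        have hs0 : 0 ≤ s := hs.1.1
        have : s < r := by
          have := lt_of_lt_of_le hlt (min_le_left _ _)
          linarith
        have : w + s • e ∈ ball w r := by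
          rw [mem_ball, hdist, abs_of_nonneg hs0]; exact this
        exact hs.2 (hball this)
      · simp only [Set.mem_singleton_iff] at hs; rw [hs]; exact min_le_right _ _
    exact lt_of_lt_of_le (lt_min (by linarith) hT) this
  have hclos : w + t • e ∈ closure Ω := by
    have htend : Filter.Tendsto (fun h : ℝ => w + h • e) (nhdsWithin t (Set.Iio t))
        (nhds (w + t • e)) := by
      apply Filter.Tendsto.mono_left _ nhdsWithin_le_nhds
      exact (Continuous.tendsto (by continuity) t)
    apply mem_closure_of_tendsto htend
    filter_upwards [Ioo_mem_nhdsLT ht0] with h hh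
    exact hin h hh.1.le hh.2
  refine ⟨t, ht0, htT, hin, hclos, ?_⟩
  intro htlt
  rw [hΩo.frontier_eq]
  refine ⟨hclos, ?_⟩
  intro hmem
  obtain ⟨δ, hδ0, hball⟩ := Metric.isOpen_iff.1 hΩo _ hmem
  set γ := min δ (T - t) with hγ
  have hγ0 : 0 < γ := lt_min hδ0 (by linarith)
  have : t + γ / 2 ≤ t := by
    rw [ht]
    apply le_csInf hne
    intro s hs
    have hst : t ≤ s := csInf_le hbdd hs
    rcases hs with hs | hs
    · by_contra hlt
      push_neg at hlt
      have : dist (w + s • e) (w + t • e) < δ := by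
        have h1 : dist (w + s • e) (w + t • e) = |s - t| := by
          rw [dist_eq_norm]
          have : w + s • e - (w + t • e) = (s - t) • e := by
            rw [sub_smul]; abel
          rw [this]; simp [norm_smul, he]
        rw [h1, abs_of_nonneg (by linarith)]
        have : γ ≤ δ := min_le_left _ _
        linarith
      exact hs.2 (hball this)
    · simp only [Set.mem_singleton_iff] at hs
      rw [hs] at hst ⊢
      have : γ ≤ T - t := min_le_right _ _
      linarith
  linarith

set_option maxHeartbeats 1000000 in
/-- If `|u| ≤ ⟪p, x₀ - ·⟫` on `closure Ω` with `x₀` a frontier point, then `‖G x₀‖ ≤ ‖p‖`. -/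
theorem contact_lemma {Ω : Set E} (hΩo : IsOpen Ω)
    {u : E → ℝ} {G : E → E}
    (hu : ContinuousOn u (closure Ω))
    (hG : ∀ x ∈ Ω, HasGradientAt u (G x) x)
    (hGc : ContinuousOn G (closure Ω))
    (hbd : ∀ x ∈ frontier Ω, u x = 0)
    {x₀ : E} (hx₀ : x₀ ∈ frontier Ω) {p : E}
    (hcontact : ∀ y ∈ closure Ω, |u y| ≤ ⟪p, x₀ - y⟫) :
    ‖G x₀‖ ≤ ‖p‖ := by
  by_contra hlt
  push_neg at hlt
  set q := G x₀ with hq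
  have hq0 : 0 < ‖q‖ := lt_of_le_of_lt (norm_nonneg p) hlt
  set ε := (‖q‖ - ‖p‖) / 4 with hε
  have hε0 : 0 < ε := by rw [hε]; linarith
  set μ := ‖q‖ - ε with hμ
  have hμ0 : 0 < μ := by
    rw [hμ, hε]
    have := norm_nonneg p
    linarith
  have hμp : μ - ‖p‖ = 3 * ε := by rw [hμ, hε]; ring
  -- continuity of G at x₀ within closure Ω
  have hx₀c : x₀ ∈ closure Ω := hx₀.1
  have hcont : ContinuousWithinAt G (closure Ω) x₀ := hGc x₀ hx₀c
  obtain ⟨ρ, hρ0, hρ⟩ : ∃ ρ > 0, ∀ y ∈ closure Ω, dist y x₀ < ρ → dist (G y) q < ε := by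
    have := Metric.continuousWithinAt_iff.1 hcont ε hε0
    obtain ⟨δ, hδ0, hδ⟩ := this
    exact ⟨δ, hδ0, fun y hy hyd => hδ hy hyd⟩
  set d : E := ‖q‖⁻¹ • q with hd
  have hdnorm : ‖d‖ = 1 := by
    rw [hd, norm_smul]
    simp [abs_of_nonneg (inv_nonneg.mpr hq0.le), inv_mul_cancel₀ (ne_of_gt hq0)]
  have hqd : ⟪q, d⟫ = ‖q‖ := by
    rw [hd, real_inner_smul_right, real_inner_self_eq_norm_sq]
    field_simp
  -- derivative lower bound near x₀
  have hkey : ∀ y ∈ Ω, dist y x₀ < ρ → μ ≤ ⟪G y, d⟫ := by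
    intro y hy hyd
    have h1 : dist (G y) q < ε := hρ y (subset_closure hy) hyd
    have h2 : ⟪G y, d⟫ = ⟪q, d⟫ + ⟪G y - q, d⟫ := by
      rw [← inner_add_left]
      congr 1
      abel
    have h3 : |⟪G y - q, d⟫| ≤ ‖G y - q‖ := by
      have := abs_real_inner_le_norm (G y - q) d
      rwa [hdnorm, mul_one] at this
    have h4 : ‖G y - q‖ < ε := by rwa [dist_eq_norm] at h1
    rw [h2, hqd, hμ]
    have := abs_le.1 h3
    linarith [this.1]
  -- choose s and the interior starting point w
  set s := min (ρ / 8) (3 * ε * ρ / (16 * (‖p‖ + 1))) with hs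
  have hs0 : 0 < s := by
    apply lt_min (by linarith)
    have : 0 < ‖p‖ + 1 := by positivity
    positivity
  have hsρ : s < ρ / 4 := lt_of_le_of_lt (min_le_left _ _) (by linarith)
  obtain ⟨w, hwΩ, hws⟩ : ∃ w ∈ Ω, dist x₀ w < s := by
    have : x₀ ∈ closure Ω := hx₀.1
    rw [Metric.mem_closure_iff] at this
    obtain ⟨w, hw, hwd⟩ := this s hs0
    exact ⟨w, hw, hwd⟩
  -- two rays: +d and -d
  have hT4 : 0 < ρ / 4 := by linarith
  obtain ⟨t₁, ht₁0, ht₁T, ht₁in, ht₁cl, ht₁fr⟩ := ray_exit hΩo hwΩ hdnorm hT4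
  have hdneg : ‖-d‖ = 1 := by rwa [norm_neg]
  obtain ⟨t₂, ht₂0, ht₂T, ht₂in, ht₂cl, ht₂fr⟩ := ray_exit hΩo hwΩ hdneg hT4
  -- membership facts
  have hmemΩ : ∀ h ∈ Set.Ioo (-t₂) t₁, w + h • d ∈ Ω := by
    intro h hh
    rcases le_or_gt 0 h with h0 | h0
    · exact ht₁in h h0 hh.2
    · have : w + h • d = w + (-h) • (-d) := by
        rw [smul_neg, neg_smul, neg_neg]
      rw [this]
      apply ht₂in (-h) (by linarith)
      have := hh.1
      linarith
  have hmemcl : ∀ h ∈ Set.Icc (-t₂) t₁, w + h • d ∈ closure Ω := by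
    intro h hh
    rcases eq_or_lt_of_le hh.2 with he | hlt'
    · rw [he]; exact ht₁cl
    rcases eq_or_lt_of_le hh.1 with he | hlt''
    · have heq2 : w + h • d = w + t₂ • (-d) := by
        rw [← he]; module
      rw [heq2]; exact ht₂cl
    · exact subset_closure (hmemΩ h ⟨hlt'', hlt'⟩)
  have hball : ∀ h : ℝ, |h| ≤ ρ / 4 → dist (w + h • d) x₀ < ρ := by
    intro h hh
    calc dist (w + h • d) x₀ ≤ dist (w + h • d) w + dist w x₀ := dist_triangle _ _ _
    _ < ρ / 4 + s := by
        apply add_lt_add_of_le_of_lt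
        · have : dist (w + h • d) w = |h| := by
            rw [dist_eq_norm]
            simp [norm_smul, hdnorm]
          rw [this]; exact hh
        · rw [dist_comm]; exact hws
    _ < ρ := by linarith
  -- the function along the segment
  set f : ℝ → ℝ := fun h => u (w + h • d) with hf
  set g : ℝ → ℝ := fun h => f h - μ * h with hg
  have habs : ∀ h ∈ Set.Icc (-t₂ : ℝ) t₁, |h| ≤ ρ / 4 := by
    intro h hh
    rw [abs_le]
    constructor
    · linarith [hh.1, ht₂T]
    · linarith [hh.2, ht₁T]
  have hDeriv : ∀ h ∈ Set.Ioo (-t₂) t₁, HasDerivAt f ⟪G (w + h • d), d⟫ h := by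
    intro h hh
    have hy : w + h • d ∈ Ω := hmemΩ h hh
    have hline : HasDerivAt (fun h : ℝ => w + h • d) d h := by
      have h1 : HasDerivAt (fun h : ℝ => h • d) ((1 : ℝ) • d) h :=
        (hasDerivAt_id h).smul_const d
      rw [one_smul] at h1
      exact h1.const_add w
    have := ((hG _ hy).hasFDerivAt).comp_hasDerivAt h hline
    simpa [hf, InnerProductSpace.toDual_apply_apply, Function.comp_def] using this
  have hgmono : MonotoneOn g (Set.Icc (-t₂) t₁) := by
    apply monotoneOn_of_deriv_nonneg (convex_Icc _ _)
    · apply ContinuousOn.sub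
      · apply hu.comp
        · exact Continuous.continuousOn (continuous_const.add (continuous_id.smul continuous_const))
        · intro h hh
          exact hmemcl h hh
      · exact (continuous_const.mul continuous_id).continuousOn
    · rw [interior_Icc]
      intro h hh
      exact (((hDeriv h hh).sub ((hasDerivAt_id h).const_mul μ)).differentiableAt).differentiableWithinAt
    · rw [interior_Icc]
      intro h hh
      have hy : w + h • d ∈ Ω := hmemΩ h hh
      have hgd : HasDerivAt g (⟪G (w + h • d), d⟫ - μ * 1) h :=
        (hDeriv h hh).sub ((hasDerivAt_id h).const_mul μ)
      rw [hgd.deriv]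
      have : μ ≤ ⟪G (w + h • d), d⟫ := by
        apply hkey _ hy
        apply hball
        apply habs
        exact ⟨hh.1.le, hh.2.le⟩
      linarith
  -- the monotonicity inequality
  have hmono : g (-t₂) ≤ g t₁ := by
    apply hgmono
    · exact ⟨le_refl _, by linarith⟩
    · exact ⟨by linarith, le_refl _⟩
    · linarith
  set z₁ : E := w + t₁ • d with hz₁
  set z₂ : E := w + (-t₂) • d with hz₂
  have hz₂cl : z₂ ∈ closure Ω := by
    have : z₂ = w + t₂ • (-d) := by rw [hz₂, smul_neg, neg_smul]
    rw [this]; exact ht₂cl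
  have hz₁cl : z₁ ∈ closure Ω := ht₁cl
  have hineq1 : μ * (t₁ + t₂) ≤ u z₁ - u z₂ := by
    have : f (-t₂) - μ * (-t₂) ≤ f t₁ - μ * t₁ := hmono
    have hf1 : f t₁ = u z₁ := rfl
    have hf2 : f (-t₂) = u z₂ := rfl
    rw [hf1, hf2] at this
    linarith
  -- contact bounds at the two endpoints
  have hub : u z₁ ≤ ⟪p, x₀ - z₁⟫ := le_trans (le_abs_self _) (hcontact z₁ hz₁cl)
  have hlb : -⟪p, x₀ - z₂⟫ ≤ u z₂ := by
    have := hcontact z₂ hz₂cl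
    have h2 := neg_abs_le (u z₂)
    linarith
  have hsum : μ * (t₁ + t₂) ≤ ⟪p, x₀ - z₁⟫ + ⟪p, x₀ - z₂⟫ := by linarith
  have hsplit : ⟪p, x₀ - z₁⟫ + ⟪p, x₀ - z₂⟫
      = 2 * ⟪p, x₀ - w⟫ - (t₁ - t₂) * ⟪p, d⟫ := by
    rw [← inner_add_right]
    have : x₀ - z₁ + (x₀ - z₂) = (2 : ℝ) • (x₀ - w) + (-(t₁ - t₂)) • d := by
      rw [hz₁, hz₂]
      module
    rw [this, inner_add_right, real_inner_smul_right, real_inner_smul_right]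
    ring
  have hCS1 : ⟪p, x₀ - w⟫ ≤ ‖p‖ * s := by
    have h1 := real_inner_le_norm p (x₀ - w)
    have h2 : ‖x₀ - w‖ < s := by rwa [← dist_eq_norm]
    nlinarith [norm_nonneg p]
  have hCS2 : -(t₁ - t₂) * ⟪p, d⟫ ≤ (t₁ + t₂) * ‖p‖ := by
    have h1 : |⟪p, d⟫| ≤ ‖p‖ := by
      have := abs_real_inner_le_norm p d
      rwa [hdnorm, mul_one] at this
    have h2 : |t₁ - t₂| ≤ t₁ + t₂ := by
      rw [abs_le]; constructor <;> linarith
    calc -(t₁ - t₂) * ⟪p, d⟫ ≤ |(-(t₁ - t₂)) * ⟪p, d⟫| := le_abs_self _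
    _ = |t₁ - t₂| * |⟪p, d⟫| := by rw [abs_mul, abs_neg]
    _ ≤ (t₁ + t₂) * ‖p‖ := by
        apply mul_le_mul h2 h1 (abs_nonneg _)
        linarith [ht₁0, ht₂0]
  have hmain : 3 * ε * (t₁ + t₂) ≤ 2 * (‖p‖ * s) := by
    have : μ * (t₁ + t₂) ≤ 2 * (‖p‖ * s) + (t₁ + t₂) * ‖p‖ := by
      calc μ * (t₁ + t₂) ≤ 2 * ⟪p, x₀ - w⟫ - (t₁ - t₂) * ⟪p, d⟫ := by
            rw [← hsplit]; exact hsum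
      _ ≤ 2 * (‖p‖ * s) + (t₁ + t₂) * ‖p‖ := by
            have := hCS2
            linarith
    nlinarith [hμp]
  -- case analysis
  rcases lt_or_ge t₁ (ρ / 4) with hcase₁ | hcase₁
  · rcases lt_or_ge t₂ (ρ / 4) with hcase₂ | hcase₂
    · -- both endpoints on the frontier: u = 0 at both ends
      have hz₁f : z₁ ∈ frontier Ω := ht₁fr hcase₁
      have hz₂f : z₂ ∈ frontier Ω := by
        have : z₂ = w + t₂ • (-d) := by rw [hz₂, smul_neg, neg_smul]
        rw [this]; exact ht₂fr hcase₂
      have h1 : u z₁ = 0 := hbd _ hz₁f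
      have h2 : u z₂ = 0 := hbd _ hz₂f
      rw [h1, h2] at hineq1
      nlinarith [ht₁0, ht₂0, hμ0]
    · -- t₂ = ρ/4 : long segment
      have hlong : ρ / 4 ≤ t₁ + t₂ := by linarith
      have hsmall : 2 * (‖p‖ * s) < 3 * ε * (ρ / 4) := by
        have hsle : s ≤ 3 * ε * ρ / (16 * (‖p‖ + 1)) := min_le_right _ _
        have hp1 : 0 < ‖p‖ + 1 := by positivity
        have h2 : ‖p‖ * s ≤ ‖p‖ * (3 * ε * ρ / (16 * (‖p‖ + 1))) :=
          mul_le_mul_of_nonneg_left hsle (norm_nonneg p)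
        have h3 : ‖p‖ * (3 * ε * ρ / (16 * (‖p‖ + 1))) < 3 * ε * ρ / 8 := by
          have hpos : (0:ℝ) < 3 * ε * ρ := by positivity
          have heq : ‖p‖ * (3 * ε * ρ / (16 * (‖p‖ + 1))) = (3 * ε * ρ) * (‖p‖ / (16 * (‖p‖ + 1))) := by ring
          have hfrac : ‖p‖ / (16 * (‖p‖ + 1)) < 1 / 8 := by
            rw [div_lt_iff₀ (by positivity)]
            nlinarith [norm_nonneg p]
          rw [heq]
          calc (3 * ε * ρ) * (‖p‖ / (16 * (‖p‖ + 1))) < (3 * ε * ρ) * (1 / 8) :=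
                mul_lt_mul_of_pos_left hfrac hpos
          _ = 3 * ε * ρ / 8 := by ring
        linarith
      have : 3 * ε * (ρ / 4) ≤ 3 * ε * (t₁ + t₂) := by nlinarith
      linarith
  · have hlong : ρ / 4 ≤ t₁ + t₂ := by linarith
    have hsmall : 2 * (‖p‖ * s) < 3 * ε * (ρ / 4) := by
      have hsle : s ≤ 3 * ε * ρ / (16 * (‖p‖ + 1)) := min_le_right _ _
      have hp1 : 0 < ‖p‖ + 1 := by positivity
      have h2 : ‖p‖ * s ≤ ‖p‖ * (3 * ε * ρ / (16 * (‖p‖ + 1))) :=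
        mul_le_mul_of_nonneg_left hsle (norm_nonneg p)
      have h3 : ‖p‖ * (3 * ε * ρ / (16 * (‖p‖ + 1))) < 3 * ε * ρ / 8 := by
        have hpos : (0:ℝ) < 3 * ε * ρ := by positivity
        have heq : ‖p‖ * (3 * ε * ρ / (16 * (‖p‖ + 1))) = (3 * ε * ρ) * (‖p‖ / (16 * (‖p‖ + 1))) := by ring
        have hfrac : ‖p‖ / (16 * (‖p‖ + 1)) < 1 / 8 := by
          rw [div_lt_iff₀ (by positivity)]
          nlinarith [norm_nonneg p]
        rw [heq]
        calc (3 * ε * ρ) * (‖p‖ / (16 * (‖p‖ + 1))) < (3 * ε * ρ) * (1 / 8) :=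
              mul_lt_mul_of_pos_left hfrac hpos
        _ = 3 * ε * ρ / 8 := by ring
      linarith
    have : 3 * ε * (ρ / 4) ≤ 3 * ε * (t₁ + t₂) := by nlinarith
    linarith

/-- Covering lemma: any nonzero `p` with `‖p‖ < sInf (boundary gradient norms)` is
attained as a gradient value on `{u < 0}`, or `-p` is attained on `{u > 0}`. -/
theorem covering {Ω : Set E} (hΩo : IsOpen Ω) (hΩb : Bornology.IsBounded Ω)
    (hΩne : Ω.Nonempty)
    {u : E → ℝ} {G : E → E}
    (hu : ContinuousOn u (closure Ω))
    (hG : ∀ x ∈ Ω, HasGradientAt u (G x) x)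
    (hGc : ContinuousOn G (closure Ω))
    (hbd : ∀ x ∈ frontier Ω, u x = 0)
    {p : E} (hp : p ≠ 0)
    (hpm : ‖p‖ < sInf ((fun x => ‖G x‖) '' frontier Ω)) :
    (∃ x ∈ Ω, u x < 0 ∧ G x = p) ∨ (∃ x ∈ Ω, 0 < u x ∧ G x = -p) := by
  classical
  set K := closure Ω with hK
  have hKc : IsCompact K := hΩb.isCompact_closure
  have hKne : K.Nonempty := hΩne.closure
  set Φ : E → ℝ := fun y => |u y| + ⟪p, y⟫ with hΦ
  have hΦc : ContinuousOn Φ K := by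
    apply ContinuousOn.add
    · exact hu.abs
    · exact Continuous.continuousOn (continuous_const.inner continuous_id)
  obtain ⟨y₀, hy₀K, hy₀max⟩ := hKc.exists_isMaxOn hKne hΦc
  have hmax : ∀ y ∈ K, |u y| + ⟪p, y⟫ ≤ |u y₀| + ⟪p, y₀⟫ := fun y hy => hy₀max hy
  -- helper: a point where u ≠ 0 is in Ω
  have hΩmem : ∀ y ∈ K, u y ≠ 0 → y ∈ Ω := by
    intro y hy hne
    by_contra hyΩ
    have : y ∈ frontier Ω := by
      rw [hΩo.frontier_eq]
      exact ⟨hy, hyΩ⟩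
    exact hne (hbd y this)
  rcases lt_trichotomy (u y₀) 0 with hneg | hzero | hpos
  · -- u y₀ < 0 : interior max of -u + ⟪p,·⟫
    left
    have hy₀Ω : y₀ ∈ Ω := hΩmem y₀ hy₀K (ne_of_lt hneg)
    refine ⟨y₀, hy₀Ω, hneg, ?_⟩
    set V : Set E := Ω ∩ u ⁻¹' Set.Iio 0 with hV
    have hVo : IsOpen V := (hu.mono subset_closure).isOpen_inter_preimage hΩo isOpen_Iio
    have hy₀V : y₀ ∈ V := ⟨hy₀Ω, hneg⟩
    set Ψ : E → ℝ := fun y => -u y + ⟪p, y⟫ with hΨ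
    have hloc : IsLocalMax Ψ y₀ := by
      have hVnhds : V ∈ nhds y₀ := hVo.mem_nhds hy₀V
      filter_upwards [hVnhds] with y hy
      have h1 : Ψ y = Φ y := by
        simp only [hΨ, hΦ]
        rw [abs_of_neg hy.2]
      have h2 : Ψ y₀ = Φ y₀ := by
        simp only [hΨ, hΦ]
        rw [abs_of_neg hneg]
      rw [h1, h2]
      exact hmax y (subset_closure hy.1)
    have hΨd : HasFDerivAt Ψ (-(InnerProductSpace.toDual ℝ E (G y₀)) + innerSL ℝ p) y₀ := by
      apply HasFDerivAt.add
      · exact ((hG y₀ hy₀Ω).hasFDerivAt).neg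
      · exact (innerSL ℝ p).hasFDerivAt
    have hzero' := hloc.hasFDerivAt_eq_zero hΨd
    apply ext_inner_right ℝ
    intro v
    have := DFunLike.congr_fun hzero' v
    simp only [ContinuousLinearMap.add_apply, ContinuousLinearMap.neg_apply,
      ContinuousLinearMap.zero_apply, InnerProductSpace.toDual_apply_apply, innerSL_apply_apply] at this
    have h2 : ⟪G y₀, v⟫ = ⟪p, v⟫ := by linarith
    rw [h2, real_inner_comm]
  · -- u y₀ = 0 : contact case
    exfalso
    have hcontact : ∀ y ∈ K, |u y| ≤ ⟪p, y₀ - y⟫ := by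
      intro y hy
      have h := hmax y hy
      rw [hzero, abs_zero] at h
      rw [inner_sub_right]
      linarith
    by_cases hy₀Ω : y₀ ∈ Ω
    · -- interior contact point: impossible since p ≠ 0
      obtain ⟨r, hr0, hball⟩ := Metric.isOpen_iff.1 hΩo y₀ hy₀Ω
      set y : E := y₀ + (r / 2) • (‖p‖⁻¹ • p) with hy
      have hp0 : 0 < ‖p‖ := norm_pos_iff.mpr hp
      have hymem : y ∈ Ω := by
        apply hball
        rw [mem_ball, hy, dist_eq_norm]
        have : y₀ + (r / 2) • (‖p‖⁻¹ • p) - y₀ = (r / 2) • (‖p‖⁻¹ • p) := by abel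
        rw [this, norm_smul, norm_smul]
        simp only [Real.norm_eq_abs]
        rw [abs_of_nonneg (by linarith : (0:ℝ) ≤ r / 2), abs_of_nonneg (inv_nonneg.mpr hp0.le),
          inv_mul_cancel₀ (ne_of_gt hp0)]
        linarith
      have := hcontact y (subset_closure hymem)
      have hval : ⟪p, y₀ - y⟫ = -(r / 2) * ‖p‖ := by
        rw [hy]
        have : y₀ - (y₀ + (r / 2) • (‖p‖⁻¹ • p)) = (-(r / 2) * ‖p‖⁻¹) • p := by
          rw [mul_smul]
          module
        rw [this, real_inner_smul_right, real_inner_self_eq_norm_sq]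
        field_simp
      rw [hval] at this
      have habs : (0:ℝ) ≤ |u y| := abs_nonneg _
      nlinarith
    · -- frontier contact point: contradicts contact_lemma
      have hy₀f : y₀ ∈ frontier Ω := by
        rw [hΩo.frontier_eq]; exact ⟨hy₀K, hy₀Ω⟩
      have h1 : ‖G y₀‖ ≤ ‖p‖ := contact_lemma hΩo hu hG hGc hbd hy₀f hcontact
      have h2 : sInf ((fun x => ‖G x‖) '' frontier Ω) ≤ ‖G y₀‖ := by
        apply csInf_le
        · exact ⟨0, fun b hb => by
            obtain ⟨x, _, hx⟩ := hb
            rw [← hx]; exact norm_nonneg _⟩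
        · exact ⟨y₀, hy₀f, rfl⟩
      linarith
  · -- u y₀ > 0
    right
    have hy₀Ω : y₀ ∈ Ω := hΩmem y₀ hy₀K (ne_of_gt hpos)
    refine ⟨y₀, hy₀Ω, hpos, ?_⟩
    set V : Set E := Ω ∩ u ⁻¹' Set.Ioi 0 with hV
    have hVo : IsOpen V := (hu.mono subset_closure).isOpen_inter_preimage hΩo isOpen_Ioi
    have hy₀V : y₀ ∈ V := ⟨hy₀Ω, hpos⟩
    set Ψ : E → ℝ := fun y => u y + ⟪p, y⟫ with hΨ
    have hloc : IsLocalMax Ψ y₀ := by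
      have hVnhds : V ∈ nhds y₀ := hVo.mem_nhds hy₀V
      filter_upwards [hVnhds] with y hy
      have h1 : Ψ y = Φ y := by
        simp only [hΨ, hΦ]
        rw [abs_of_pos hy.2]
      have h2 : Ψ y₀ = Φ y₀ := by
        simp only [hΨ, hΦ]
        rw [abs_of_pos hpos]
      rw [h1, h2]
      exact hmax y (subset_closure hy.1)
    have hΨd : HasFDerivAt Ψ ((InnerProductSpace.toDual ℝ E (G y₀)) + innerSL ℝ p) y₀ := by
      apply HasFDerivAt.add
      · exact (hG y₀ hy₀Ω).hasFDerivAt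
      · exact (innerSL ℝ p).hasFDerivAt
    have hzero' := hloc.hasFDerivAt_eq_zero hΨd
    apply ext_inner_right ℝ
    intro v
    have := DFunLike.congr_fun hzero' v
    simp only [ContinuousLinearMap.add_apply, ContinuousLinearMap.zero_apply,
      InnerProductSpace.toDual_apply_apply, innerSL_apply_apply] at this
    have h2 : ⟪G y₀, v⟫ = -⟪p, v⟫ := by linarith
    rw [h2, inner_neg_left]

end Auxiliary

theorem stmt16 {n : ℕ} (hn : 0 < n)
    (Ω : Set (EuclideanSpace ℝ (Fin n))) (hΩo : IsOpen Ω)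
    (hΩb : Bornology.IsBounded Ω) (hΩne : Ω.Nonempty)
    (ν : EuclideanSpace ℝ (Fin n) → EuclideanSpace ℝ (Fin n))
    (hν : IsOutwardUnitNormal Ω ν)
    (u : EuclideanSpace ℝ (Fin n) → ℝ)
    (G : EuclideanSpace ℝ (Fin n) → EuclideanSpace ℝ (Fin n))
    -- `u ∈ C²(Ω) ∩ C¹(Ω̄)`
    (hu2 : ContDiffOn ℝ 2 u Ω)
    (hu : ContinuousOn u (closure Ω))
    (hG : ∀ x ∈ Ω, HasGradientAt u (G x) x)
    (hGc : ContinuousOn G (closure Ω))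
    -- `u` not identically zero
    (hune : ∃ x ∈ Ω, u x ≠ 0)
    -- `det(∇²u) = λ |u|ⁿ` in `Ω`, `λ > 0`
    (lam : ℝ) (hlam : 0 < lam)
    (heq : ∀ x ∈ Ω, (hessianMatrix u x).det = lam * |u x| ^ (n : ℕ))
    -- `u = 0` on `∂Ω`
    (hbd : ∀ x ∈ frontier Ω, u x = 0) :
    lam ≥ (volume (Metric.ball (0 : EuclideanSpace ℝ (Fin n)) 1)).toReal *
      (sInf ((fun x => ‖G x‖) '' frontier Ω) /
        (∫ x in Ω, |u x| ^ (n : ℝ)) ^ ((n : ℝ)⁻¹)) ^ (n : ℕ) := by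
  classical
  haveI : Nonempty (Fin n) := ⟨⟨0, hn⟩⟩
  haveI : Nontrivial (EuclideanSpace ℝ (Fin n)) := inferInstance
  set m := sInf ((fun x => ‖G x‖) '' frontier Ω) with hm
  have hm0 : 0 ≤ m := by
    apply Real.sInf_nonneg
    rintro b ⟨x, -, rfl⟩
    exact norm_nonneg _
  set J : ℝ := ∫ x in Ω, |u x| ^ (n : ℕ) with hJ
  -- basic integrability
  have hKc : IsCompact (closure Ω) := hΩb.isCompact_closure
  have hcf : ContinuousOn (fun x => |u x| ^ (n : ℕ)) (closure Ω) := (hu.abs).pow n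
  have hIntc : IntegrableOn (fun x => |u x| ^ (n : ℕ)) (closure Ω) volume :=
    hcf.integrableOn_compact hKc
  have hInt : IntegrableOn (fun x => |u x| ^ (n : ℕ)) Ω volume :=
    hIntc.mono_set subset_closure
  -- J is positive
  have hJ0 : 0 < J := by
    obtain ⟨x₁, hx₁Ω, hx₁⟩ := hune
    have hCA : ContinuousAt u x₁ := by
      apply (hu x₁ (subset_closure hx₁Ω)).continuousAt
      exact mem_nhds_iff.mpr ⟨Ω, subset_closure, hΩo, hx₁Ω⟩
    have h2 : (0:ℝ) < |u x₁| / 2 := by positivity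
    obtain ⟨δ₁, hδ₁0, hδ₁⟩ := Metric.continuousAt_iff.1 hCA (|u x₁| / 2) h2
    obtain ⟨δ₂, hδ₂0, hδ₂⟩ := Metric.isOpen_iff.1 hΩo x₁ hx₁Ω
    set δ := min δ₁ δ₂ with hδ
    have hδ0 : 0 < δ := lt_min hδ₁0 hδ₂0
    have hsub : ball x₁ δ ⊆ Ω := fun y hy =>
      hδ₂ (mem_ball.mpr (lt_of_lt_of_le (mem_ball.mp hy) (min_le_right _ _)))
    have hlow : ∀ y ∈ ball x₁ δ, (|u x₁| / 2) ^ (n : ℕ) ≤ |u y| ^ (n : ℕ) := by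
      intro y hy
      apply pow_le_pow_left₀ h2.le
      have := hδ₁ (lt_of_lt_of_le hy (min_le_left _ _))
      have h3 : |u y - u x₁| < |u x₁| / 2 := by
        rwa [Real.dist_eq] at this
      have := abs_sub_abs_le_abs_sub (u y) (u x₁)
      have h4 := abs_sub_abs_le_abs_sub (u x₁) (u y)
      rw [abs_sub_comm] at h4
      linarith [abs_le.1 h3.le]
    have hpos : 0 < (volume (ball x₁ δ)).toReal := by
      apply ENNReal.toReal_pos
      · exact (measure_ball_pos volume x₁ hδ0).ne'
      · exact (measure_ball_lt_top).ne
    calc (0:ℝ) < (volume (ball x₁ δ)).toReal * ((|u x₁| / 2) ^ (n : ℕ)) := by positivity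
    _ = ∫ _ in ball x₁ δ, (|u x₁| / 2) ^ (n : ℕ) := by
        rw [setIntegral_const]
        simp [Measure.real]
    _ ≤ ∫ y in ball x₁ δ, |u y| ^ (n : ℕ) := by
        apply setIntegral_mono_on
        · exact integrableOn_const measure_ball_lt_top.ne
        · exact hInt.mono_set hsub
        · exact measurableSet_ball
        · exact hlow
    _ ≤ J := by
        apply setIntegral_mono_set hInt
        · filter_upwards with y using by positivity
        · exact HasSubset.Subset.eventuallyLE hsub
  -- the two open subdomains
  set Ωneg : Set (EuclideanSpace ℝ (Fin n)) := Ω ∩ u ⁻¹' Set.Iio 0 with hΩneg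
  set Ωpos : Set (EuclideanSpace ℝ (Fin n)) := Ω ∩ u ⁻¹' Set.Ioi 0 with hΩpos
  have hnego : IsOpen Ωneg := (hu.mono subset_closure).isOpen_inter_preimage hΩo isOpen_Iio
  have hposo : IsOpen Ωpos := (hu.mono subset_closure).isOpen_inter_preimage hΩo isOpen_Ioi
  -- image measure bounds
  have himg1 : volume (G '' Ωneg) ≤ ∫⁻ x in Ωneg, ENNReal.ofReal (lam * |u x| ^ (n : ℕ)) := by
    have h1 := addHaar_image_le_lintegral_abs_det_fderiv volume hnego.measurableSet
      (f := G) (f' := fun x => Gderiv u x)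
      (fun x hx => ((aux1 hΩo hu2 hG hx.1).1).hasFDerivWithinAt)
    refine h1.trans (le_of_eq ?_)
    apply setLIntegral_congr_fun_ae hnego.measurableSet
    filter_upwards with x hx
    rw [(aux1 hΩo hu2 hG hx.1).2, heq x hx.1, abs_of_nonneg (by positivity)]
  have himg2 : volume ((fun x => -G x) '' Ωpos)
      ≤ ∫⁻ x in Ωpos, ENNReal.ofReal (lam * |u x| ^ (n : ℕ)) := by
    have h1 := addHaar_image_le_lintegral_abs_det_fderiv volume hposo.measurableSet
      (f := fun x => -G x) (f' := fun x => -(Gderiv u x))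
      (fun x hx => (((aux1 hΩo hu2 hG hx.1).1).neg).hasFDerivWithinAt)
    refine h1.trans (le_of_eq ?_)
    apply setLIntegral_congr_fun_ae hposo.measurableSet
    filter_upwards with x hx
    have hdetneg : (-(Gderiv u x)).det = (-1 : ℝ) ^ (Module.finrank ℝ (EuclideanSpace ℝ (Fin n))) * (Gderiv u x).det := by
      show LinearMap.det (((-(Gderiv u x)) : EuclideanSpace ℝ (Fin n) →L[ℝ] EuclideanSpace ℝ (Fin n)) :
          EuclideanSpace ℝ (Fin n) →ₗ[ℝ] EuclideanSpace ℝ (Fin n)) = _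
      rw [ContinuousLinearMap.coe_neg,
        ← neg_one_smul ℝ ((Gderiv u x : EuclideanSpace ℝ (Fin n) →L[ℝ] EuclideanSpace ℝ (Fin n)) :
          EuclideanSpace ℝ (Fin n) →ₗ[ℝ] EuclideanSpace ℝ (Fin n)), LinearMap.det_smul]
    rw [hdetneg, abs_mul, abs_pow, abs_neg, abs_one, one_pow, one_mul,
      (aux1 hΩo hu2 hG hx.1).2, heq x hx.1, abs_of_nonneg (by positivity)]
  -- covering of the ball
  have hcov : ball (0 : EuclideanSpace ℝ (Fin n)) m \ {0}
      ⊆ (G '' Ωneg) ∪ ((fun x => -G x) '' Ωpos) := by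
    rintro p ⟨hpball, hp0⟩
    have hpm : ‖p‖ < m := by rwa [mem_ball_zero_iff] at hpball
    have hp0' : p ≠ 0 := hp0
    rcases covering hΩo hΩb hΩne hu hG hGc hbd hp0' hpm with ⟨x, hxΩ, hxu, hxG⟩ | ⟨x, hxΩ, hxu, hxG⟩
    · exact Or.inl ⟨x, ⟨hxΩ, hxu⟩, hxG⟩
    · refine Or.inr ⟨x, ⟨hxΩ, hxu⟩, ?_⟩
      show -G x = p
      rw [hxG, neg_neg]
  -- measure chain
  have hchainE : volume (ball (0 : EuclideanSpace ℝ (Fin n)) m)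
      ≤ ENNReal.ofReal (lam * J) := by
    have h0 : volume (ball (0 : EuclideanSpace ℝ (Fin n)) m)
        = volume (ball (0 : EuclideanSpace ℝ (Fin n)) m \ {0}) := by
      rw [measure_diff_null (measure_singleton 0)]
    rw [h0]
    calc volume (ball (0 : EuclideanSpace ℝ (Fin n)) m \ {0})
        ≤ volume ((G '' Ωneg) ∪ ((fun x => -G x) '' Ωpos)) := measure_mono hcov
    _ ≤ volume (G '' Ωneg) + volume ((fun x => -G x) '' Ωpos) := measure_union_le _ _
    _ ≤ (∫⁻ x in Ωneg, ENNReal.ofReal (lam * |u x| ^ (n : ℕ)))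
          + ∫⁻ x in Ωpos, ENNReal.ofReal (lam * |u x| ^ (n : ℕ)) := add_le_add himg1 himg2
    _ = ∫⁻ x in Ωneg ∪ Ωpos, ENNReal.ofReal (lam * |u x| ^ (n : ℕ)) := by
        rw [lintegral_union hposo.measurableSet]
        apply Set.disjoint_left.mpr
        rintro x ⟨-, hx1⟩ ⟨-, hx2⟩
        simp only [Set.mem_preimage, Set.mem_Iio] at hx1
        simp only [Set.mem_preimage, Set.mem_Ioi] at hx2
        linarith
    _ ≤ ∫⁻ x in Ω, ENNReal.ofReal (lam * |u x| ^ (n : ℕ)) := by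
        apply lintegral_mono' _ le_rfl
        apply Measure.restrict_mono _ le_rfl
        rintro x (hx | hx) <;> exact hx.1
    _ = ENNReal.ofReal (∫ x in Ω, lam * |u x| ^ (n : ℕ)) := by
        rw [ofReal_integral_eq_lintegral_ofReal]
        · exact hInt.const_mul lam
        · filter_upwards with x using by positivity
    _ = ENNReal.ofReal (lam * J) := by rw [MeasureTheory.integral_const_mul]
  -- compute the volume of the ball of radius m
  have hballm : volume (ball (0 : EuclideanSpace ℝ (Fin n)) m)
      = ENNReal.ofReal (m ^ (n : ℕ)) * volume (ball (0 : EuclideanSpace ℝ (Fin n)) 1) := by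
    rw [Measure.addHaar_ball volume 0 hm0, finrank_euclideanSpace_fin]
  -- pass to real numbers
  set V := volume (ball (0 : EuclideanSpace ℝ (Fin n)) 1) with hV
  have hVtop : V ≠ ⊤ := measure_ball_lt_top.ne
  have hreal : m ^ (n : ℕ) * V.toReal ≤ lam * J := by
    have h1 : ENNReal.ofReal (m ^ (n : ℕ)) * V ≤ ENNReal.ofReal (lam * J) := by
      rw [← hballm]; exact hchainE
    have h2 := ENNReal.toReal_mono ENNReal.ofReal_ne_top h1
    rw [ENNReal.toReal_mul, ENNReal.toReal_ofReal (by positivity)] at h2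
    rw [ENNReal.toReal_ofReal (by positivity)] at h2
    exact h2
  -- final algebra
  have hJr : (∫ x in Ω, |u x| ^ (n : ℝ)) = J := by
    rw [hJ]
    apply integral_congr_ae
    filter_upwards with x
    exact Real.rpow_natCast _ n
  rw [ge_iff_le, hJr]
  set I := J ^ ((n : ℝ)⁻¹) with hI
  have hIn : I ^ (n : ℕ) = J := Real.rpow_inv_natCast_pow hJ0.le hn.ne'
  have hI0 : 0 < I := Real.rpow_pos_of_pos hJ0 _
  have heq2 : V.toReal * (m / I) ^ (n : ℕ) = (V.toReal * m ^ (n : ℕ)) / J := by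
    rw [div_pow, hIn]
    ring
  rw [heq2, div_le_iff₀ hJ0]
  nlinarith [hreal]
end
end
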